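/- arXiv:2311.15334 — 6 statements merged into one kernel-verified Lean document; each statement's English description precedes it below -/
import Mathlib

section
/- For every tree T on n vertices, the number of independent sets i(T) satisfies F_{n+2} ≤ i(T) ≤ 2^{n-1} + 1. -/
open SimpleGraph Walk

section AuxIndep

universe u
variable {V : Type u}

noncomputable def numIndepSets {V : Type*} (G : SimpleGraph V) : ℕ :=
  Nat.card {s : Set V // ∀ u ∈ s, ∀ v ∈ s, ¬ G.Adj u v}

/-- independence predicate -/
def IndepP (G : SimpleGraph V) (s : Set V) : Prop := ∀ u ∈ s, ∀ v ∈ s, ¬ G.Adj u v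

lemma numIndepSets_def (G : SimpleGraph V) :
    numIndepSets G = Nat.card {s : Set V // IndepP G s} := rfl

lemma indep_induce_iff (G : SimpleGraph V) (A : Set V) (t : Set ↥A) :
    IndepP (G.induce A) t ↔ ∀ u ∈ t, ∀ v ∈ t, ¬ G.Adj ↑u ↑v := by
  unfold IndepP
  simp [comap_adj]

/-- indep subsets of a set `A` correspond to indep sets of the induced graph -/
noncomputable def indepSubsetEquiv (G : SimpleGraph V) (A : Set V) :
    {s : Set V // IndepP G s ∧ s ⊆ A} ≃ {t : Set ↥A // IndepP (G.induce A) t} where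
  toFun s := ⟨Subtype.val ⁻¹' s.1, by
    rw [indep_induce_iff]
    intro u hu v hv
    exact s.2.1 _ hu _ hv⟩
  invFun t := ⟨Subtype.val '' t.1, by
    constructor
    · rintro u ⟨a, ha, rfl⟩ v ⟨b, hb, rfl⟩
      exact (indep_induce_iff G A t.1).1 t.2 a ha b hb
    · rintro u ⟨a, ha, rfl⟩; exact a.2⟩
  left_inv s := by
    ext1
    simp only [Subtype.image_preimage_coe]
    exact Set.inter_eq_right.2 s.2.2
  right_inv t := by
    ext1
    exact Set.preimage_image_eq _ Subtype.val_injective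

lemma card_indep_subsets (G : SimpleGraph V) (A : Set V) :
    Nat.card {s : Set V // IndepP G s ∧ s ⊆ A} = numIndepSets (G.induce A) := by
  rw [numIndepSets_def]
  exact Nat.card_congr (indepSubsetEquiv G A)

/-- indep sets containing `v` correspond to indep sets of the graph induced on
non-neighbors of `v` -/
noncomputable def indepMemEquiv (G : SimpleGraph V) (v : V) :
    {s : Set V // IndepP G s ∧ v ∈ s} ≃
      {t : Set ↥{x | ¬ G.Adj v x ∧ x ≠ v} // IndepP (G.induce {x | ¬ G.Adj v x ∧ x ≠ v}) t} where
  toFun s := ⟨Subtype.val ⁻¹' s.1, by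
    rw [indep_induce_iff]
    intro u hu w hw
    exact s.2.1 _ hu _ hw⟩
  invFun t := ⟨Subtype.val '' t.1 ∪ {v}, by
    have ht := (indep_induce_iff G _ t.1).1 t.2
    constructor
    · rintro u (⟨a, ha, rfl⟩ | rfl) w (⟨b, hb, rfl⟩ | rfl)
      · exact ht a ha b hb
      · intro h; exact a.2.1 h.symm
      · exact b.2.1
      · exact G.irrefl
    · right; rfl⟩
  left_inv s := by
    obtain ⟨s, hs, hv⟩ := s
    ext1
    simp only [Subtype.image_preimage_coe]
    ext x
    simp only [Set.mem_union, Set.mem_inter_iff, Set.mem_setOf_eq, Set.mem_singleton_iff]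
    constructor
    · rintro (⟨⟨h1, h2⟩, hx⟩ | rfl) <;> assumption
    · intro hx
      by_cases hxv : x = v
      · right; exact hxv
      · left; exact ⟨⟨fun h => hs v hv x hx h, hxv⟩, hx⟩
  right_inv t := by
    ext1
    ext a
    simp only [Set.mem_preimage, Set.mem_union, Set.mem_singleton_iff]
    constructor
    · rintro (h | h)
      · exact (Subtype.val_injective.mem_set_image).1 h
      · exact absurd h a.2.2
    · intro ha; exact Or.inl ⟨a, ha, rfl⟩

lemma numIndepSets_split [Finite V] (G : SimpleGraph V) (v : V) :
    numIndepSets G = numIndepSets (G.induce {x | x ≠ v})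
      + numIndepSets (G.induce {x | ¬ G.Adj v x ∧ x ≠ v}) := by
  classical
  rw [numIndepSets_def]
  have e : {s : Set V // IndepP G s} ≃
      {s : Set V // IndepP G s ∧ v ∉ s} ⊕ {s : Set V // IndepP G s ∧ v ∈ s} := by
    refine ((Equiv.sumCompl (fun s : {s : Set V // IndepP G s} => v ∈ s.1)).symm.trans
      (Equiv.sumComm _ _)).trans (Equiv.sumCongr ?_ ?_)
    · exact Equiv.subtypeSubtypeEquivSubtypeInter (IndepP G) (fun s => v ∉ s)
    · exact Equiv.subtypeSubtypeEquivSubtypeInter (IndepP G) (fun s => v ∈ s)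
  rw [Nat.card_congr e, Nat.card_sum]
  congr 1
  · rw [← card_indep_subsets]
    apply Nat.card_congr
    apply Equiv.subtypeEquivRight
    intro s
    constructor
    · rintro ⟨h1, h2⟩; exact ⟨h1, fun x hx => fun (hxv : x = v) => h2 (hxv ▸ hx)⟩
    · rintro ⟨h1, h2⟩; exact ⟨h1, fun hv => (h2 hv) rfl⟩
  · rw [numIndepSets_def]
    exact Nat.card_congr (indepMemEquiv G v)

lemma numIndepSets_le_pow [Finite V] (G : SimpleGraph V) :
    numIndepSets G ≤ 2 ^ Nat.card V := by
  have : Nat.card {s : Set V // IndepP G s} ≤ Nat.card (Set V) :=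
    Nat.card_le_card_of_injective Subtype.val Subtype.val_injective
  rw [numIndepSets_def]
  refine this.trans_eq ?_
  have : Fintype V := Fintype.ofFinite V
  rw [Nat.card_eq_fintype_card, Nat.card_eq_fintype_card, Fintype.card_set]

lemma numIndepSets_of_no_adj [Finite V] (G : SimpleGraph V) (h : ∀ a b, ¬ G.Adj a b) :
    numIndepSets G = 2 ^ Nat.card V := by
  rw [numIndepSets_def]
  have e : {s : Set V // IndepP G s} ≃ Set V :=
    Equiv.subtypeUnivEquiv (fun s => fun u _ w _ => h u w)
  rw [Nat.card_congr e]
  have : Fintype V := Fintype.ofFinite V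
  rw [Nat.card_eq_fintype_card, Nat.card_eq_fintype_card, Fintype.card_set]

lemma fib_add_two_le_two_pow (m : ℕ) : Nat.fib (m + 2) ≤ 2 ^ m := by
  induction m using Nat.strong_induction_on with
  | _ m IH =>
    match m with
    | 0 => simp
    | 1 => simp [Nat.fib]
    | (k + 2) =>
      rw [Nat.fib_add_two]
      calc Nat.fib (k + 2) + Nat.fib (k + 3) ≤ 2 ^ k + 2 ^ (k + 1) := by
            exact Nat.add_le_add (IH k (by omega)) (IH (k+1) (by omega))
        _ ≤ 2 ^ (k + 2) := by ring_nf; omega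

variable {V : Type u}

lemma exists_leaf [Finite V] (G : SimpleGraph V) (hac : G.IsAcyclic)
    {a b : V} (hab : G.Adj a b) :
    ∃ u w, G.Adj u w ∧ ∀ x, G.Adj u x → x = w := by
  classical
  have : Fintype V := Fintype.ofFinite V
  set S : Set ℕ := {n | ∃ u v : V, ∃ p : G.Walk u v, p.IsPath ∧ p.length = n} with hS
  have hfin : S.Finite := by
    apply Set.Finite.subset (Set.finite_Iio (Fintype.card V))
    rintro n ⟨u, v, p, hp, rfl⟩
    exact hp.length_lt
  have h1S : 1 ∈ S := ⟨a, b, (Path.singleton hab).1, (Path.singleton hab).2, rfl⟩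
  obtain ⟨n, hn, hmax⟩ : ∃ n ∈ S, ∀ j ∈ S, id n ≤ id j → id n = id j := by
    obtain ⟨n, hn, hmax⟩ := Set.Finite.exists_maximalFor id S hfin ⟨1, h1S⟩
    exact ⟨n, hn, fun j hj hle => le_antisymm hle (hmax hj hle)⟩
  obtain ⟨u, v, p, hp, hlen⟩ := hn
  -- n ≥ 1
  have hn1 : 1 ≤ n := by
    by_contra h
    have h0 : n = 0 := by omega
    have := hmax 1 h1S (by simp only [id]; omega)
    simp only [id] at this
    omega
  -- p is a cons
  cases p with
  | nil => simp at hlen; omega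
  | cons h q =>
    rename_i w'
    refine ⟨u, w', h, ?_⟩
    intro x hx
    by_contra hxw
    have hup : u ∉ q.support ∧ q.IsPath := by
      have := (Walk.cons_isPath_iff h q).1 hp
      exact ⟨this.2, this.1⟩
    by_cases hxs : x ∈ (Walk.cons h q).support
    · -- x in support: build a cycle
      rw [Walk.support_cons, List.mem_cons] at hxs
      have hxu : x ≠ u := hx.ne'
      rcases hxs with h' | hxs
      · exact hxu h'
      -- x ∈ q.support, x ≠ w'
      set q' := q.takeUntil x hxs with hq'
      have hq'path : q'.IsPath := hup.2.takeUntil hxs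
      have huq' : u ∉ q'.support := fun hh => hup.1 (Walk.support_takeUntil_subset _ hxs hh)
      have hr : (Walk.cons h q').IsPath := (Walk.cons_isPath_iff h q').2 ⟨hq'path, huq'⟩
      have hcyc : (Walk.cons hx ((Walk.cons h q').reverse)).IsCycle := by
        rw [Walk.cons_isCycle_iff]
        refine ⟨hr.reverse, ?_⟩
        rw [Walk.edges_reverse, List.mem_reverse]
        rw [Walk.edges_cons, List.mem_cons]
        rintro (heq | hmem)
        · rw [Sym2.eq_iff] at heq
          rcases heq with ⟨-, h2⟩ | ⟨h1, h2⟩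
          · exact hxw h2
          · exact hx.ne h2.symm
        · exact huq' (Walk.fst_mem_support_of_mem_edges q' hmem)
      exact hac _ hcyc
    · -- extend the path: contradiction with maximality
      have hlong : ((Walk.cons h q).cons hx.symm).IsPath :=
        (Walk.cons_isPath_iff _ _).2 ⟨hp, hxs⟩
      have : n + 1 ∈ S := ⟨x, v, _, hlong, by simp [hlen]⟩
      have := hmax (n+1) this (by simp only [id]; omega)
      simp only [id] at this
      omega

lemma isAcyclic_induce (G : SimpleGraph V) (hac : G.IsAcyclic) (A : Set V) :
    (G.induce A).IsAcyclic := by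
  intro v c hc
  have := (SimpleGraph.Walk.map_isCycle_iff_of_injective (p := c)
    (f := (SimpleGraph.Embedding.induce (G := G) A).toHom)
    (fun a b hab => Subtype.val_injective hab)).2 hc
  exact hac _ this

lemma leaf_not_mem_support (G : SimpleGraph V) {u w : V}
    (hleaf : ∀ x, G.Adj u x → x = w) {a b : V} (p : G.Walk a b) (hp : p.IsPath)
    (ha : a ≠ u) (hb : b ≠ u) : u ∉ p.support := by
  induction p with
  | nil => simp [ha.symm]
  | cons h q IH =>
    rename_i x c y
    rw [Walk.cons_isPath_iff] at hp
    by_cases hcu : c = u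
    · subst hcu
      have hxw : x = w := hleaf x (h.symm)
      cases q with
      | nil => exact absurd rfl hb
      | cons h2 q2 =>
        rename_i d
        have hdw : d = w := hleaf d h2
        exfalso
        apply hp.2
        rw [Walk.support_cons, List.mem_cons]
        right
        rw [hxw, ← hdw]
        exact q2.start_mem_support
    · have := IH hp.1 hcu hb
      rw [Walk.support_cons, List.mem_cons]
      rintro (h' | h')
      · exact ha h'.symm
      · exact this h'

lemma reachable_induce_of_support (G : SimpleGraph V) (A : Set V) {a b : V}
    (p : G.Walk a b) (hsub : ∀ z ∈ p.support, z ∈ A) :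
    ∀ (ha : a ∈ A) (hb : b ∈ A), (G.induce A).Reachable ⟨a, ha⟩ ⟨b, hb⟩ := by
  induction p with
  | nil => intro ha hb; rfl
  | cons h q IH =>
    intro ha hb
    rename_i x c y
    have hc : c ∈ A := hsub c (by simp)
    have hadj : (G.induce A).Adj ⟨x, ha⟩ ⟨c, hc⟩ := by simpa using h
    exact hadj.reachable.trans (IH (fun z hz => hsub z (by simp [hz])) hc hb)

lemma connected_induce_compl_leaf (G : SimpleGraph V) (hT : G.IsTree) {u w : V}
    (hw : G.Adj u w) (hleaf : ∀ x, G.Adj u x → x = w) :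
    (G.induce {x | x ≠ u}).Connected := by
  classical
  have hne : Nonempty {x // x ∈ ({x | x ≠ u} : Set V)} := ⟨⟨w, hw.ne'⟩⟩
  apply SimpleGraph.Connected.mk
  intro x y
  obtain ⟨x, hx⟩ := x
  obtain ⟨y, hy⟩ := y
  obtain ⟨p₀⟩ := hT.isConnected.preconnected x y
  set p := p₀.toPath with hp
  have hsup : u ∉ (p : G.Walk x y).support :=
    leaf_not_mem_support G hleaf _ p.2 hx hy
  refine reachable_induce_of_support G _ (p : G.Walk x y) ?_ hx hy
  intro z hz
  show z ≠ u
  intro hzu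
  exact hsup (hzu ▸ hz)

lemma card_ne_set {V : Type u} [Finite V] (u : V) :
    Nat.card ↥({x | x ≠ u} : Set V) = Nat.card V - 1 := by
  rw [Nat.card_coe_set_eq]
  have h1 : ({x | x ≠ u} : Set V) = ({u} : Set V)ᶜ := by ext x; simp
  have h2 := Set.ncard_add_ncard_compl ({u} : Set V)
  rw [Set.ncard_singleton] at h2
  rw [h1]
  omega

lemma card_pair_compl {V : Type u} [Finite V] {u w : V} (huw : u ≠ w) :
    Nat.card ↥(({u, w} : Set V)ᶜ) = Nat.card V - 2 := by
  rw [Nat.card_coe_set_eq]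
  have h2 := Set.ncard_add_ncard_compl ({u, w} : Set V)
  rw [Set.ncard_pair huw] at h2
  omega

lemma bset_eq {V : Type u} (G : SimpleGraph V) {u w : V} (hw : G.Adj u w)
    (hleaf : ∀ x, G.Adj u x → x = w) :
    {x | ¬ G.Adj u x ∧ x ≠ u} = ({u, w} : Set V)ᶜ := by
  ext x
  simp only [Set.mem_setOf_eq, Set.mem_compl_iff, Set.mem_insert_iff, Set.mem_singleton_iff,
    not_or]
  constructor
  · rintro ⟨h1, h2⟩
    exact ⟨h2, fun hxw => h1 (hxw ▸ hw)⟩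
  · rintro ⟨h1, h2⟩
    exact ⟨fun h => h2 (hleaf x h), h1⟩

lemma forest_lower (m : ℕ) : ∀ (V : Type u) [Finite V] (G : SimpleGraph V),
    G.IsAcyclic → Nat.card V = m → Nat.fib (m + 2) ≤ numIndepSets G := by
  induction m using Nat.strong_induction_on with
  | _ m IH =>
  intro V _ G hac hcard
  by_cases hE : ∀ a b, ¬ G.Adj a b
  · rw [numIndepSets_of_no_adj G hE, hcard]
    exact fib_add_two_le_two_pow m
  · push_neg at hE
    obtain ⟨a, b, hab⟩ := hE
    obtain ⟨x, y, hw, hleaf⟩ := exists_leaf G hac hab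
    have hm2 : 2 ≤ m := by
      have hf : Fintype V := Fintype.ofFinite V
      rw [Nat.card_eq_fintype_card] at hcard
      have : Nontrivial V := ⟨⟨x, y, hw.ne⟩⟩
      have := Fintype.one_lt_card_iff_nontrivial.2 this
      omega
    obtain ⟨k, rfl⟩ : ∃ k, m = k + 2 := ⟨m - 2, by omega⟩
    rw [numIndepSets_split G x, bset_eq G hw hleaf]
    have c1 : Nat.card ↥({z | z ≠ x} : Set V) = k + 1 := by
      rw [card_ne_set]; omega
    have c2 : Nat.card ↥(({x, y} : Set V)ᶜ) = k := by
      rw [card_pair_compl hw.ne]; omega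
    have l1 := IH (k + 1) (by omega) _ (G.induce {z | z ≠ x})
      (isAcyclic_induce G hac _) c1
    have l2 := IH k (by omega) _ (G.induce (({x, y} : Set V)ᶜ))
      (isAcyclic_induce G hac _) c2
    calc Nat.fib (k + 2 + 2) = Nat.fib (k + 2) + Nat.fib (k + 1 + 2) := Nat.fib_add_two
      _ ≤ numIndepSets (G.induce (({x, y} : Set V)ᶜ)) + numIndepSets (G.induce {z | z ≠ x}) :=
          Nat.add_le_add l2 l1
      _ = _ := Nat.add_comm _ _

lemma tree_upper (m : ℕ) : ∀ (V : Type u) [Finite V] (G : SimpleGraph V),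
    G.IsTree → Nat.card V = m → numIndepSets G ≤ 2 ^ (m - 1) + 1 := by
  induction m using Nat.strong_induction_on with
  | _ m IH =>
  intro V _ G hT hcard
  match m, hcard with
  | 0, hcard =>
    exfalso
    have : Nonempty V := hT.isConnected.nonempty
    have := Nat.card_pos (α := V)
    omega
  | 1, hcard =>
    have hsub : Subsingleton V := (Nat.card_eq_one_iff_unique.1 hcard).1
    have hE : ∀ a b, ¬ G.Adj a b := fun a b h => h.ne (Subsingleton.elim a b)
    rw [numIndepSets_of_no_adj G hE, hcard]
    norm_num
  | (k + 2), hcard =>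
    obtain ⟨a, b, hab⟩ : ∃ a b, G.Adj a b := by
      have : Nontrivial V := by
        have : Fintype V := Fintype.ofFinite V
        rw [Nat.card_eq_fintype_card] at hcard
        exact Fintype.one_lt_card_iff_nontrivial.1 (by omega)
      obtain ⟨c, d, hcd⟩ := exists_pair_ne V
      obtain ⟨p⟩ := hT.isConnected.preconnected c d
      cases p with
      | nil => exact absurd rfl hcd
      | cons h _ => exact ⟨_, _, h⟩
    obtain ⟨x, y, hw, hleaf⟩ := exists_leaf G hT.IsAcyclic hab
    rw [numIndepSets_split G x, bset_eq G hw hleaf]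
    have c1 : Nat.card ↥({z | z ≠ x} : Set V) = k + 1 := by
      rw [card_ne_set]; omega
    have c2 : Nat.card ↥(({x, y} : Set V)ᶜ) = k := by
      rw [card_pair_compl hw.ne]; omega
    have hT1 : (G.induce {z | z ≠ x}).IsTree :=
      ⟨connected_induce_compl_leaf G hT hw hleaf, isAcyclic_induce G hT.IsAcyclic _⟩
    have l1 := IH (k + 1) (by omega) _ (G.induce {z | z ≠ x}) hT1 c1
    have l2 : numIndepSets (G.induce (({x, y} : Set V)ᶜ)) ≤ 2 ^ k := by
      have := numIndepSets_le_pow (G.induce (({x, y} : Set V)ᶜ))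
      rwa [c2] at this
    have : (k + 1 : ℕ) - 1 = k := by omega
    rw [this] at l1
    have : (k + 2 : ℕ) - 1 = k + 1 := by omega
    rw [this]
    calc numIndepSets (G.induce {z | z ≠ x}) + numIndepSets (G.induce (({x, y} : Set V)ᶜ))
        ≤ (2 ^ k + 1) + 2 ^ k := Nat.add_le_add l1 l2
      _ = 2 ^ (k + 1) + 1 := by ring

end AuxIndep

theorem stmt2 {V : Type*} [Fintype V] (G : SimpleGraph V) (hT : G.IsTree) (n : ℕ)
    (hn : Fintype.card V = n) :
    Nat.fib (n + 2) ≤ numIndepSets G ∧ numIndepSets G ≤ 2 ^ (n - 1) + 1 := by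
  have h1 : Nat.card V = n := by rw [Nat.card_eq_fintype_card, hn]
  exact ⟨forest_lower n V G hT.IsAcyclic h1, tree_upper n V G hT h1⟩
end

section
/- For a tree T on n vertices, i(T) = 2^{n-1} + 1 if and only if T is isomorphic to the star K_{1,n-1}. -/
open SimpleGraph Finset

open scoped Classical in
lemma numIndepSets_eq_card {V : Type*} [Fintype V] (G : SimpleGraph V) :
    numIndepSets G =
      (Finset.univ.filter (fun s : Finset V => ∀ u ∈ s, ∀ v ∈ s, ¬ G.Adj u v)).card := by
  classical
  rw [numIndepSets, ← Fintype.card_subtype]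
  have e : {s : Set V // ∀ u ∈ s, ∀ v ∈ s, ¬ G.Adj u v} ≃
      {s : Finset V // ∀ u ∈ s, ∀ v ∈ s, ¬ G.Adj u v} :=
    Equiv.subtypeEquiv Fintype.finsetEquivSet.symm (fun s => by simp [Set.mem_toFinset])
  rw [Nat.card_congr e]
  exact Nat.card_eq_fintype_card

/-- `v` is the center of a star. -/
def IsStarCtr {V : Type*} (G : SimpleGraph V) (v : V) : Prop :=
  (∀ u, u ≠ v → G.Adj v u) ∧ ∀ a b, a ≠ v → b ≠ v → ¬ G.Adj a b

open scoped Classical in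
lemma starCtr_count {V : Type*} [Fintype V] (G : SimpleGraph V) (v : V)
    (h : IsStarCtr G v) : numIndepSets G = 2 ^ (Fintype.card V - 1) + 1 := by
  classical
  rw [numIndepSets_eq_card]
  have hset : (Finset.univ.filter (fun s : Finset V => ∀ u ∈ s, ∀ w ∈ s, ¬ G.Adj u w)) =
      (Finset.univ.erase v).powerset ∪ {{v}} := by
    ext s
    simp only [Finset.mem_filter, Finset.mem_univ, true_and, Finset.mem_union,
      Finset.mem_powerset, Finset.mem_singleton]
    constructor
    · intro hs
      by_cases hv : v ∈ s
      · right
        apply Finset.eq_singleton_iff_unique_mem.2 ⟨hv, fun u hu => ?_⟩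
        by_contra hne
        exact hs v hv u hu (h.1 u hne)
      · left
        intro x hx
        exact Finset.mem_erase.2 ⟨fun hxv => hv (hxv ▸ hx), Finset.mem_univ x⟩
    · rintro (hs | rfl)
      · intro a ha b hb
        exact h.2 a b (Finset.mem_erase.1 (hs ha)).1 (Finset.mem_erase.1 (hs hb)).1
      · intro a ha b hb
        rw [Finset.mem_singleton] at ha hb
        subst ha; subst hb; exact G.irrefl
  rw [hset, Finset.card_union_of_disjoint, Finset.card_powerset, Finset.card_erase_of_mem
    (Finset.mem_univ v), Finset.card_univ, Finset.card_singleton]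
  · rw [Finset.disjoint_singleton_right, Finset.mem_powerset]
    intro hsub
    have := Finset.mem_erase.1 (hsub (Finset.mem_singleton_self v))
    exact this.1 rfl

open scoped Classical in
lemma starCtr_iso {V : Type*} [Fintype V] (G : SimpleGraph V) (v : V) {n : ℕ}
    (hn : Fintype.card V = n) (h : IsStarCtr G v) :
    Nonempty (G ≃g completeBipartiteGraph (Fin 1) (Fin (n - 1))) := by
  classical
  have hcard : Fintype.card {x : V // ¬ x = v} = n - 1 := by
    rw [Fintype.card_subtype_compl, Fintype.card_subtype_eq, hn]
  let e1 : {x : V // x = v} ≃ Fin 1 := Fintype.equivFinOfCardEq (Fintype.card_subtype_eq v)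
  let e2 : {x : V // ¬ x = v} ≃ Fin (n-1) := Fintype.equivFinOfCardEq hcard
  let e : V ≃ (Fin 1 ⊕ Fin (n-1)) :=
    (Equiv.sumCompl (· = v)).symm.trans (Equiv.sumCongr e1 e2)
  have hleft : ∀ a : V, a = v → (e a).isLeft := by
    intro a ha
    simp only [e, Equiv.trans_apply, Equiv.sumCongr_apply]
    rw [Equiv.sumCompl_symm_apply_of_pos (p := (· = v)) (a := a) ha]
    simp
  have hright : ∀ a : V, a ≠ v → (e a).isRight := by
    intro a ha
    simp only [e, Equiv.trans_apply, Equiv.sumCongr_apply]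
    rw [Equiv.sumCompl_symm_apply_of_neg (p := (· = v)) (a := a) ha]
    simp
  refine ⟨⟨e, ?_⟩⟩
  intro a b
  simp only [completeBipartiteGraph_adj]
  constructor
  · rintro (⟨hl, hr⟩ | ⟨hr, hl⟩)
    · have hav : a = v := by
        by_contra hav
        rw [Sum.isLeft_iff] at hl
        obtain ⟨x, hx⟩ := hl
        have := hright a hav
        rw [hx] at this; simp at this
      have hbv : b ≠ v := by
        intro hbv
        have := hleft b hbv
        rw [Sum.isRight_iff] at hr
        obtain ⟨x, hx⟩ := hr
        rw [hx] at this; simp at this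
      exact hav ▸ h.1 b hbv
    · have hbv : b = v := by
        by_contra hbv
        have := hright b hbv
        rw [Sum.isLeft_iff] at hl
        obtain ⟨x, hx⟩ := hl
        rw [hx] at this; simp at this
      have hav : a ≠ v := by
        intro hav
        have := hleft a hav
        rw [Sum.isRight_iff] at hr
        obtain ⟨x, hx⟩ := hr
        rw [hx] at this; simp at this
      exact ((hbv ▸ h.1 a hav).symm : G.Adj a b)
  · intro hab
    by_cases hav : a = v
    · have hbv : b ≠ v := by rintro rfl; exact G.irrefl (hav ▸ hab)
      exact Or.inl ⟨hleft a hav, hright b hbv⟩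
    · by_cases hbv : b = v
      · exact Or.inr ⟨hright a hav, hleft b hbv⟩
      · exact absurd hab (h.2 a b hav hbv)

lemma iso_starCtr {V : Type*} (G : SimpleGraph V) {m : ℕ}
    (φ : G ≃g completeBipartiteGraph (Fin 1) (Fin m)) :
    ∃ v, IsStarCtr G v := by
  refine ⟨φ.symm (Sum.inl 0), ?_, ?_⟩
  · intro u hu
    have h1 : φ (φ.symm (Sum.inl 0)) = Sum.inl 0 := φ.apply_symm_apply _
    rw [← φ.map_rel_iff]
    rw [h1]
    have h2 : (φ u).isRight := by
      rcases hφ : φ u with x | x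
      · exfalso
        apply hu
        have : φ u = Sum.inl 0 := by rw [hφ]; congr; exact Subsingleton.elim x 0
        have := congrArg φ.symm this
        rwa [φ.symm_apply_apply] at this
      · simp
    simp [completeBipartiteGraph_adj, h2]
  · intro a b ha hb hab
    have h2 : ∀ c : V, c ≠ φ.symm (Sum.inl 0) → (φ c).isRight := by
      intro c hc
      rcases hφ : φ c with x | x
      · exfalso
        apply hc
        have : φ c = Sum.inl 0 := by rw [hφ]; congr; exact Subsingleton.elim x 0
        have := congrArg φ.symm this
        rwa [φ.symm_apply_apply] at this
      · simp
    rw [← φ.map_rel_iff] at hab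
    have := h2 a ha
    have := h2 b hb
    rcases hx : φ a with x | x <;> rcases hy : φ b with y | y <;>
      rw [hx, hy] at hab <;> simp_all [completeBipartiteGraph_adj]

lemma tree_dominating_starCtr {V : Type*} (G : SimpleGraph V) (hT : G.IsTree) (v : V)
    (hdom : ∀ u, u ≠ v → G.Adj v u) : IsStarCtr G v := by
  refine ⟨hdom, ?_⟩
  intro a b ha hb hab
  have hva : G.Adj v a := hdom a ha
  have hbv : G.Adj b v := (hdom b hb).symm
  have hne : a ≠ b := G.ne_of_adj hab
  let c : G.Walk v v := Walk.cons hva (Walk.cons hab (Walk.cons hbv Walk.nil))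
  have hc : c.IsCycle := by
    constructor
    constructor
    · simp only [c, Walk.isTrail_def, Walk.edges_cons, Walk.edges_nil, List.nodup_cons,
        List.mem_cons, List.mem_singleton, List.not_mem_nil, List.nodup_nil, and_true,
        not_or, Sym2.eq, Sym2.rel_iff', Prod.mk.injEq, Prod.swap_prod_mk]
      have h1 : ¬ v = a := fun h => ha h.symm
      have h2 : ¬ v = b := fun h => hb h.symm
      tauto
    · simp [c]
    · simp only [c, Walk.support_cons, Walk.support_nil, List.tail_cons, List.nodup_cons,
        List.mem_cons, List.mem_singleton, List.not_mem_nil, List.nodup_nil, and_true, not_or]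
      simp_all [Ne.symm]
  exact hT.IsAcyclic c hc

open scoped Classical in
lemma tree_exists_leaf {V : Type*} [Fintype V] (G : SimpleGraph V) (hT : G.IsTree)
    (h2 : 2 ≤ Fintype.card V) : ∃ r c : V, G.neighborFinset r = {c} := by
  classical
  have hconn := hT.isConnected
  have hdegpos : ∀ v : V, 0 < G.degree v := by
    intro v
    rw [SimpleGraph.degree_pos_iff_exists_adj]
    obtain ⟨u, hu⟩ := Fintype.exists_ne_of_one_lt_card h2 v
    obtain ⟨p⟩ := hconn.preconnected v u
    cases p with
    | nil => exact absurd rfl hu.symm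
    | cons h q => exact ⟨_, h⟩
  have hsum : ∑ v : V, G.degree v = 2 * (Fintype.card V - 1) := by
    rw [SimpleGraph.sum_degrees_eq_twice_card_edges]
    have := hT.card_edgeFinset
    omega
  by_contra hno
  push_neg at hno
  have hdeg2 : ∀ v : V, 2 ≤ G.degree v := by
    intro v
    rcases Nat.lt_or_ge (G.degree v) 2 with hlt | hge
    · exfalso
      have h1 : G.degree v = 1 := by have := hdegpos v; omega
      rw [SimpleGraph.degree] at h1
      obtain ⟨c, hc⟩ := Finset.card_eq_one.1 h1
      exact hno v c hc
    · exact hge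
  have hbig : 2 * Fintype.card V ≤ ∑ v : V, G.degree v := by
    calc 2 * Fintype.card V = ∑ _v : V, 2 := by
          rw [Finset.sum_const, Finset.card_univ, smul_eq_mul, mul_comm]
      _ ≤ ∑ v : V, G.degree v := Finset.sum_le_sum (fun v _ => hdeg2 v)
  rw [hsum] at hbig
  omega

lemma aux_exists_pred {V : Type*} (G : SimpleGraph V) (hconn : G.Connected) (r : V)
    (m : ℕ) (x : V) (hx : G.dist r x = m + 1) : ∃ y, G.Adj y x ∧ G.dist r y = m := by
  obtain ⟨p, hp⟩ := (hconn.preconnected r x).exists_walk_length_eq_dist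
  have hrevlen : p.reverse.length = m + 1 := by rw [SimpleGraph.Walk.length_reverse, hp, hx]
  cases hq : p.reverse with
  | nil => rw [hq] at hrevlen; simp at hrevlen
  | @cons _ y _ h q =>
    rw [hq] at hrevlen
    simp only [SimpleGraph.Walk.length_cons] at hrevlen
    have hqlen : q.length = m := by omega
    have hle : G.dist r y ≤ m := by
      have := G.dist_le q.reverse
      rwa [SimpleGraph.Walk.length_reverse, hqlen] at this
    have hge : m ≤ G.dist r y := by
      have htri := hconn.dist_triangle (u := r) (v := y) (w := x)
      have hyx : G.dist y x ≤ 1 := by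
        have := G.dist_le h.symm.toWalk
        simpa using this
      omega
    exact ⟨y, h.symm, le_antisymm hle hge⟩

lemma aux_exists_dist_eq {V : Type*} (G : SimpleGraph V) (hconn : G.Connected) (r : V)
    (k : ℕ) : ∀ (m : ℕ) (x : V), G.dist r x = k + m → ∃ w, G.dist r w = k := by
  intro m
  induction m with
  | zero => exact fun x hx => ⟨x, hx⟩
  | succ m ih =>
    intro x hx
    obtain ⟨y, _, hy⟩ := aux_exists_pred G hconn r (k + m) x (by omega)
    exact ih y hy

open scoped Classical in
lemma nonstar_bound {V : Type*} [Fintype V] (G : SimpleGraph V) (hT : G.IsTree)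
    (h : ∀ v : V, ∃ u, u ≠ v ∧ ¬ G.Adj v u) :
    numIndepSets G ≤ 2 ^ (Fintype.card V - 1) := by
  classical
  have hconn := hT.isConnected
  have hne : Nonempty V := hconn.nonempty
  have h2 : 2 ≤ Fintype.card V := by
    by_contra hlt
    push_neg at hlt
    have h1 : Fintype.card V ≤ 1 := by omega
    have hsub : Subsingleton V := Fintype.card_le_one_iff_subsingleton.1 h1
    obtain ⟨v⟩ := hne
    obtain ⟨u, hu, _⟩ := h v
    exact hu (Subsingleton.elim u v)
  obtain ⟨r, c, hrc⟩ := tree_exists_leaf G hT h2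
  have hadj_rc : G.Adj r c := by rw [← SimpleGraph.mem_neighborFinset, hrc]; simp
  obtain ⟨x, hxc, hxnadj⟩ := h c
  have hxr : x ≠ r := fun hxr => hxnadj (hxr ▸ hadj_rc.symm)
  have hdcx : 2 ≤ G.dist c x := by
    have hpos := hconn.pos_dist_of_ne (Ne.symm hxc)
    have hne1 : G.dist c x ≠ 1 := fun h1 => hxnadj ((SimpleGraph.dist_eq_one_iff_adj).1 h1)
    omega
  -- every walk from x to r ends with the edge c-r, so dist r x ≥ 3
  have hdrx : 3 ≤ G.dist r x := by
    have hposxr : 0 < G.dist x r := hconn.pos_dist_of_ne hxr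
    obtain ⟨y, hyr, hxy⟩ := aux_exists_pred G hconn x (G.dist x r - 1) r (by omega)
    have hyc : y = c := by
      have : y ∈ G.neighborFinset r := by rw [SimpleGraph.mem_neighborFinset]; exact hyr.symm
      rw [hrc] at this
      exact Finset.mem_singleton.1 this
    have hxc' : G.dist x c = G.dist x r - 1 := hyc ▸ hxy
    have hcomm1 : G.dist r x = G.dist x r := SimpleGraph.dist_comm
    have hcomm2 : G.dist c x = G.dist x c := SimpleGraph.dist_comm
    omega
  obtain ⟨w, hw⟩ := aux_exists_dist_eq G hconn r 3 (G.dist r x - 3) x (by omega)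
  obtain ⟨z, hzw, hz⟩ := aux_exists_pred G hconn r 2 w (by omega)
  have hzr : z ≠ r := by intro hh; rw [hh, SimpleGraph.dist_self] at hz; omega
  have hwr : w ≠ r := by intro hh; rw [hh, SimpleGraph.dist_self] at hw; omega
  have hwz : w ≠ z := by intro hh; rw [hh, hz] at hw; omega
  -- the parent function
  have hdepth0 : ∀ b : V, b ≠ r → 1 ≤ G.dist r b := fun b hb =>
    hconn.pos_dist_of_ne (Ne.symm hb)
  have hpar0 : ∀ b : V, ∃ y : V, b ≠ r → (G.Adj y b ∧ G.dist r y + 1 = G.dist r b) := by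
    intro b
    by_cases hb : b = r
    · exact ⟨r, fun hbr => absurd hb hbr⟩
    · obtain ⟨y, hy1, hy2⟩ := aux_exists_pred G hconn r (G.dist r b - 1) b
        (by have := hdepth0 b hb; omega)
      exact ⟨y, fun _ => ⟨hy1, by have := hdepth0 b hb; omega⟩⟩
  choose par hpar using hpar0
  -- minimal-depth element choice
  have hmn0 : ∀ A : Finset V, ∃ a : V, A.Nonempty →
      (a ∈ A ∧ ∀ b ∈ A, G.dist r a ≤ G.dist r b) := by
    intro A
    by_cases hA : A.Nonempty
    · obtain ⟨a, ha, hmin⟩ := A.exists_min_image (fun v => G.dist r v) hA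
      exact ⟨a, fun _ => ⟨ha, hmin⟩⟩
    · exact ⟨r, fun hh => absurd hh hA⟩
  choose mn hmn using hmn0
  set φ : Finset V → Finset V := fun A => insert (par (mn A)) A with hφ
  set S : Finset (Finset V) := ((Finset.univ.erase r).powerset).erase ∅ with hS
  have hkey : ∀ A ∈ S, mn A ∈ A ∧ G.Adj (par (mn A)) (mn A) ∧
      (∀ b ∈ A, G.dist r (par (mn A)) < G.dist r b) ∧ par (mn A) ∉ A ∧ r ∉ A := by
    intro A hA
    rw [hS, Finset.mem_erase, Finset.mem_powerset] at hA
    have hAne : A.Nonempty := Finset.nonempty_iff_ne_empty.2 hA.1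
    have hAr : r ∉ A := fun hr => (Finset.mem_erase.1 (hA.2 hr)).1 rfl
    obtain ⟨haA, hmin⟩ := hmn A hAne
    have haR : mn A ≠ r := fun hh => hAr (hh ▸ haA)
    obtain ⟨hadj, hdepth⟩ := hpar (mn A) haR
    have hlt : ∀ b ∈ A, G.dist r (par (mn A)) < G.dist r b := by
      intro b hb
      have := hmin b hb
      omega
    have hpA : par (mn A) ∉ A := fun hp => lt_irrefl _ (hlt _ hp)
    exact ⟨haA, hadj, hlt, hpA, hAr⟩
  set B₀ : Finset V := {r, z, w} with hB₀
  set Dp : Finset (Finset V) :=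
    Finset.univ.filter (fun s : Finset V => ¬ ∀ u ∈ s, ∀ v ∈ s, ¬ G.Adj u v) with hDp
  have hB0mem : B₀ ∈ Dp := by
    rw [hDp, Finset.mem_filter]
    refine ⟨Finset.mem_univ _, fun hindep => ?_⟩
    exact hindep z (by simp [hB₀]) w (by simp [hB₀]) hzw
  have hmaps : ∀ A ∈ S, φ A ∈ Dp.erase B₀ := by
    intro A hA
    obtain ⟨haA, hadj, hlt, hpA, hAr⟩ := hkey A hA
    rw [Finset.mem_erase]
    constructor
    · -- φ A ≠ B₀
      intro heq
      have hrp : r = par (mn A) := by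
        have hrB : r ∈ φ A := by rw [heq]; simp [hB₀]
        rcases Finset.mem_insert.1 hrB with hh | hh
        · exact hh
        · exact absurd hh hAr
      have hzA : z ∈ A := by
        have hzB : z ∈ φ A := by rw [heq]; simp [hB₀]
        rcases Finset.mem_insert.1 hzB with hh | hh
        · exact absurd (hh.trans hrp.symm) hzr
        · exact hh
      have haB : mn A ∈ B₀ := by rw [← heq]; exact Finset.mem_insert_of_mem haA
      have har : mn A ≠ r := fun hh => hAr (hh ▸ haA)
      have hazw : mn A = z ∨ mn A = w := by
        rw [hB₀] at haB
        simp only [Finset.mem_insert, Finset.mem_singleton] at haB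
        tauto
      have haz : mn A = z := by
        rcases hazw with hh | hh
        · exact hh
        · exfalso
          have hle := (hmn A ⟨_, haA⟩).2 z hzA
          rw [hh, hw, hz] at hle
          omega
      obtain ⟨_, hdepth⟩ := hpar (mn A) har
      rw [← hrp, SimpleGraph.dist_self, haz, hz] at hdepth
      omega
    · rw [hDp, Finset.mem_filter]
      refine ⟨Finset.mem_univ _, fun hindep => ?_⟩
      exact hindep (par (mn A)) (Finset.mem_insert_self _ _)
        (mn A) (Finset.mem_insert_of_mem haA) hadj
  have hinj : Set.InjOn φ S := by
    intro A1 h1 A2 h2 heq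
    obtain ⟨ha1, _, hlt1, hp1, _⟩ := hkey A1 h1
    obtain ⟨ha2, _, hlt2, hp2, _⟩ := hkey A2 h2
    have heq' : insert (par (mn A1)) A1 = insert (par (mn A2)) A2 := heq
    have hpp : par (mn A1) = par (mn A2) := by
      by_contra hnep
      have hm1 : par (mn A1) ∈ insert (par (mn A2)) A2 := by
        rw [← heq']; exact Finset.mem_insert_self _ _
      have hm2 : par (mn A2) ∈ insert (par (mn A1)) A1 := by
        rw [heq']; exact Finset.mem_insert_self _ _
      have h1A2 : par (mn A1) ∈ A2 := (Finset.mem_insert.1 hm1).resolve_left hnep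
      have h2A1 : par (mn A2) ∈ A1 := (Finset.mem_insert.1 hm2).resolve_left (Ne.symm hnep)
      have := hlt2 _ h1A2
      have := hlt1 _ h2A1
      omega
    calc A1 = (insert (par (mn A1)) A1).erase (par (mn A1)) :=
          (Finset.erase_insert hp1).symm
      _ = (insert (par (mn A2)) A2).erase (par (mn A2)) := by rw [heq', hpp]
      _ = A2 := Finset.erase_insert hp2
  have hScard : S.card = 2 ^ (Fintype.card V - 1) - 1 := by
    rw [hS, Finset.card_erase_of_mem (Finset.mem_powerset.2 (Finset.empty_subset _)),
      Finset.card_powerset, Finset.card_erase_of_mem (Finset.mem_univ r), Finset.card_univ]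
  have hcard_le : S.card ≤ (Dp.erase B₀).card := Finset.card_le_card_of_injOn φ hmaps hinj
  have hDpB : (Dp.erase B₀).card = Dp.card - 1 := Finset.card_erase_of_mem hB0mem
  have hDppos : 1 ≤ Dp.card := Finset.card_pos.2 ⟨B₀, hB0mem⟩
  have hone : 1 ≤ 2 ^ (Fintype.card V - 1) := Nat.one_le_two_pow
  have hDp_ge : 2 ^ (Fintype.card V - 1) ≤ Dp.card := by omega
  have htot : (Finset.univ.filter (fun s : Finset V => ∀ u ∈ s, ∀ v ∈ s, ¬ G.Adj u v)).card
      + Dp.card = 2 ^ Fintype.card V := by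
    rw [hDp, Finset.card_filter_add_card_filter_not, Finset.card_univ,
      Fintype.card_finset]
  have hpow : 2 ^ Fintype.card V = 2 ^ (Fintype.card V - 1) * 2 := by
    conv_lhs => rw [show Fintype.card V = (Fintype.card V - 1) + 1 by omega]
    rw [pow_succ]
  rw [numIndepSets_eq_card]
  omega

theorem stmt3 {V : Type*} [Fintype V] (G : SimpleGraph V) (hT : G.IsTree) (n : ℕ)
    (hn : Fintype.card V = n) :
    numIndepSets G = 2 ^ (n - 1) + 1 ↔
      Nonempty (G ≃g completeBipartiteGraph (Fin 1) (Fin (n - 1))) := by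
  subst hn
  constructor
  · intro hcount
    by_cases hdom : ∃ v : V, ∀ u, u ≠ v → G.Adj v u
    · obtain ⟨v, hv⟩ := hdom
      exact starCtr_iso G v rfl (tree_dominating_starCtr G hT v hv)
    · push_neg at hdom
      have hb := nonstar_bound G hT hdom
      omega
  · rintro ⟨φ⟩
    obtain ⟨v, hv⟩ := iso_starCtr G φ
    exact starCtr_count G v hv
end

section
/- If G is a unicyclic graph of order n whose unique cycle has length k, then i(G) ≤ 2^{n-k} F_{k+1} + F_{k-1}. -/
open SimpleGraph

namespace UniHelp

set_option linter.unusedSectionVars false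

variable {V : Type*} [Fintype V] (G : SimpleGraph V)

def IndepIn (s : Set V) : Prop := ∀ u ∈ s, ∀ v ∈ s, ¬ G.Adj u v

noncomputable def cnt (A : Set V) : ℕ := Nat.card {s : Set V // s ⊆ A ∧ IndepIn G s}

variable {G}

lemma IndepIn.mono {s t : Set V} (h : IndepIn G s) (hts : t ⊆ s) : IndepIn G t :=
  fun u hu v hv => h u (hts hu) v (hts hv)

lemma cnt_mono {A B : Set V} (h : A ⊆ B) : cnt G A ≤ cnt G B := by
  have : Finite {s : Set V // s ⊆ B ∧ IndepIn G s} := Subtype.finite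
  refine Nat.card_le_card_of_injective
    (fun s => ⟨s.1, s.2.1.trans h, s.2.2⟩) ?_
  intro a b hab
  simpa [Subtype.ext_iff] using hab

lemma cnt_empty : cnt G (∅ : Set V) = 1 := by
  have : Unique {s : Set V // s ⊆ (∅ : Set V) ∧ IndepIn G s} :=
    ⟨⟨⟨∅, le_refl _, fun u hu => absurd hu (Set.notMem_empty u)⟩⟩,
     fun s => Subtype.ext (Set.subset_empty_iff.mp s.2.1)⟩
  exact Nat.card_unique

lemma cnt_split {A : Set V} {v : V} (hv : v ∈ A) :
    cnt G A = cnt G (A \ {v}) + cnt G (A \ {x | x = v ∨ G.Adj v x}) := by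
  classical
  have prop1 : ∀ s : {s : Set V // s ⊆ A ∧ IndepIn G s}, v ∈ s.1 →
      s.1 \ {v} ⊆ A \ {x | x = v ∨ G.Adj v x} ∧ IndepIn G (s.1 \ {v}) := by
    intro s h
    constructor
    · rintro x ⟨hxs, hxv⟩
      refine ⟨s.2.1 hxs, ?_⟩
      rintro (rfl | hadj)
      · exact hxv rfl
      · exact s.2.2 v h x hxs hadj
    · exact s.2.2.mono Set.diff_subset
  have prop2 : ∀ s : {s : Set V // s ⊆ A ∧ IndepIn G s}, v ∉ s.1 →
      s.1 ⊆ A \ {v} ∧ IndepIn G s.1 := by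
    intro s h
    exact ⟨fun x hx => ⟨s.2.1 hx, fun hxv => h (hxv ▸ hx)⟩, s.2.2⟩
  have prop3 : ∀ t : {s : Set V // s ⊆ A \ {x | x = v ∨ G.Adj v x} ∧ IndepIn G s},
      insert v t.1 ⊆ A ∧ IndepIn G (insert v t.1) := by
    intro t
    constructor
    · intro x hx
      rcases Set.mem_insert_iff.mp hx with rfl | hx
      · exact hv
      · exact (t.2.1 hx).1
    · intro a ha b hb hadj
      rcases Set.mem_insert_iff.mp ha with rfl | ha <;>
        rcases Set.mem_insert_iff.mp hb with rfl | hb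
      · exact G.irrefl hadj
      · exact (t.2.1 hb).2 (Or.inr hadj)
      · exact (t.2.1 ha).2 (Or.inr hadj.symm)
      · exact t.2.2 a ha b hb hadj
  have e : {s : Set V // s ⊆ A ∧ IndepIn G s} ≃
      {s : Set V // s ⊆ A \ {v} ∧ IndepIn G s} ⊕
      {s : Set V // s ⊆ A \ {x | x = v ∨ G.Adj v x} ∧ IndepIn G s} :=
    { toFun := fun s => if h : v ∈ s.1 then Sum.inr ⟨s.1 \ {v}, prop1 s h⟩
        else Sum.inl ⟨s.1, prop2 s h⟩
      invFun := fun t => match t with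
        | Sum.inl t => ⟨t.1, t.2.1.trans Set.diff_subset, t.2.2⟩
        | Sum.inr t => ⟨insert v t.1, prop3 t⟩
      left_inv := by
        intro s
        by_cases h : v ∈ s.1
        · simp only [dif_pos h]
          exact Subtype.ext (Set.insert_diff_singleton.trans (Set.insert_eq_self.mpr h))
        · simp only [dif_neg h]
      right_inv := by
        rintro (t | t)
        · have hvt : v ∉ t.1 := fun h => ((t.2.1 h).2 rfl)
          simp only [dif_neg hvt]
        · have hvt : v ∉ t.1 := fun h => ((t.2.1 h).2 (Or.inl rfl))
          have hmem : v ∈ insert v t.1 := Set.mem_insert _ _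
          simp only [hmem, dif_pos]
          congr 1
          exact Subtype.ext (by simp only []; rw [Set.insert_diff_self_of_notMem hvt]) }
  rw [cnt, Nat.card_congr e, Nat.card_sum]
  rfl

lemma card_set_coe (C : Set V) : Nat.card (Set C) = 2 ^ C.ncard := by
  classical
  rw [Nat.card_eq_fintype_card, Fintype.card_set, ← Nat.card_coe_set_eq,
    Nat.card_eq_fintype_card]

lemma cnt_le_pow_mul {A B : Set V} (h : B ⊆ A) :
    cnt G A ≤ cnt G B * 2 ^ (A \ B).ncard := by
  classical
  have : Finite ({t : Set V // t ⊆ B ∧ IndepIn G t} × Set ↥(A \ B)) := by infer_instance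
  have hinj : Function.Injective
      (fun s : {s : Set V // s ⊆ A ∧ IndepIn G s} =>
        ((⟨s.1 ∩ B, Set.inter_subset_right, s.2.2.mono Set.inter_subset_left⟩ :
            {t : Set V // t ⊆ B ∧ IndepIn G t}),
         ({x : ↥(A \ B) | x.1 ∈ s.1} : Set ↥(A \ B)))) := by
    intro s s' hss
    have h1 : s.1 ∩ B = s'.1 ∩ B := congrArg Subtype.val (congrArg Prod.fst hss)
    have h2 : ∀ x : ↥(A \ B), x.1 ∈ s.1 ↔ x.1 ∈ s'.1 := by
      intro x
      have h3 := congrArg Prod.snd hss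
      simp only [Set.ext_iff] at h3
      exact h3 x
    apply Subtype.ext
    ext x
    by_cases hxB : x ∈ B
    · constructor
      · intro hx; exact (h1 ▸ (Set.mem_inter hx hxB) : x ∈ s'.1 ∩ B).1
      · intro hx; exact ((h1.symm ▸ (Set.mem_inter hx hxB)) : x ∈ s.1 ∩ B).1
    · constructor
      · intro hx; exact (h2 ⟨x, ⟨s.2.1 hx, hxB⟩⟩).mp hx
      · intro hx; exact (h2 ⟨x, ⟨s'.2.1 hx, hxB⟩⟩).mpr hx
  calc cnt G A ≤ Nat.card ({t : Set V // t ⊆ B ∧ IndepIn G t} × Set ↥(A \ B)) :=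
        Nat.card_le_card_of_injective _ hinj
    _ = cnt G B * 2 ^ (A \ B).ncard := by rw [Nat.card_prod, card_set_coe]; rfl


variable (G)

def IsCycList (l : List V) : Prop :=
  l.Nodup ∧ l.Chain' G.Adj ∧ ∀ (h : l ≠ []), G.Adj (l.getLast h) (l.head h)

variable {G}

lemma isCycList_rotate_one {l : List V} (hl : IsCycList G l) : IsCycList G (l.rotate 1) := by
  obtain ⟨hnd, hch, hwrap⟩ := hl
  match l with
  | [] => exact ⟨hnd, hch, hwrap⟩
  | [a] => exact absurd (hwrap (by simp)) (G.loopless.irrefl a)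
  | a :: b :: t =>
    rw [List.rotate_cons_succ, List.rotate_zero]
    have hne : (b :: t) ≠ [] := List.cons_ne_nil _ _
    have hwrap' := hwrap (List.cons_ne_nil _ _)
    have hlast : (a :: b :: t).getLast (List.cons_ne_nil _ _) = (b :: t).getLast hne :=
      List.getLast_cons hne
    refine ⟨?_, ?_, ?_⟩
    · exact ((List.perm_append_singleton a (b :: t)).nodup_iff).mpr hnd
    · refine List.IsChain.append (List.isChain_cons_cons.mp hch).2 (List.isChain_singleton a) ?_
      intro x hx y hy
      rw [List.getLast?_eq_getLast_of_ne_nil hne] at hx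
      simp only [List.head?_cons, Option.mem_some_iff] at hx hy
      subst hx; subst hy
      rw [← hlast]
      exact hwrap' 
    · intro h
      have h1 : ((b :: t) ++ [a]).getLast h = a := List.getLast_append_right (by simp) |>.trans rfl
      have h2 : ((b :: t) ++ [a]).head h = b := List.head_append_left hne
      rw [h1, h2]
      exact (List.isChain_cons_cons.mp hch).1


lemma isCycList_rotate {l : List V} (hl : IsCycList G l) (n : ℕ) : IsCycList G (l.rotate n) := by
  induction n with
  | zero => simpa using hl
  | succ m ih =>
    have : l.rotate (m + 1) = (l.rotate m).rotate 1 := by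
      rw [List.rotate_rotate]
    rw [this]
    exact isCycList_rotate_one ih

lemma exists_rotate_head {l : List V} {y : V} (hy : y ∈ l) :
    ∃ m : List V, (∀ x, x ∈ m ↔ x ∈ l) ∧ m.length = l.length ∧
      (IsCycList G l → IsCycList G m) ∧ ∃ t, m = y :: t := by
  classical
  have hi : l.idxOf y < l.length := List.idxOf_lt_length_iff.mpr hy
  refine ⟨l.rotate (l.idxOf y), fun x => List.mem_rotate, List.length_rotate l _,
    fun h => isCycList_rotate h _, l.drop (l.idxOf y + 1) ++ l.take (l.idxOf y), ?_⟩
  rw [List.rotate_eq_drop_append_take hi.le, List.drop_eq_getElem_cons hi,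
    List.getElem_idxOf hi, List.cons_append]

lemma head_ne_getLast {l : List V} (hnd : l.Nodup) (hne : l ≠ []) (hlen : 2 ≤ l.length) :
    l.head hne ≠ l.getLast hne := by
  match l with
  | [a] => simp at hlen
  | a :: b :: t =>
    have h1 : (a :: b :: t).head (List.cons_ne_nil _ _) = a := rfl
    have h2 : (a :: b :: t).getLast (List.cons_ne_nil _ _) = (b :: t).getLast (List.cons_ne_nil _ _) :=
      List.getLast_cons _
    rw [show (a :: b :: t).head hne = a from rfl, h2]
    clear h1
    intro hcon
    have : a ∈ b :: t := hcon ▸ List.getLast_mem _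
    exact (List.nodup_cons.mp hnd).1 this

/-- every vertex on a cycle list has two distinct neighbours on the list. -/
lemma cyc_two_nbrs {l : List V} (hl : IsCycList G l) (hlen : 3 ≤ l.length) {y : V}
    (hy : y ∈ l) : ∃ n1 n2 : V, n1 ≠ n2 ∧ n1 ∈ l ∧ n2 ∈ l ∧ G.Adj y n1 ∧ G.Adj y n2 := by
  obtain ⟨m, hmem, hlenm, hcyc, t, rfl⟩ := exists_rotate_head (G := G) hy
  obtain ⟨hnd, hch, hwrap⟩ := hcyc hl
  have htne : t ≠ [] := by
    rintro rfl; rw [← hlenm] at hlen; simp at hlen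
  have htlen : 2 ≤ t.length := by
    simp only [List.length_cons] at hlenm
    omega
  refine ⟨t.head htne, t.getLast htne, head_ne_getLast (List.nodup_cons.mp hnd).2 htne htlen,
    hmem (t.head htne) |>.mp ?_, hmem (t.getLast htne) |>.mp ?_, ?_, ?_⟩
  · exact List.mem_cons_of_mem _ (List.head_mem htne)
  · exact List.mem_cons_of_mem _ (List.getLast_mem htne)
  · -- Adj y (head t) from chain'
    have := hch
    match t, htne with
    | b :: t', _ => exact (List.isChain_cons_cons.mp this).1
  · -- Adj y (getLast t) from wrap
    have hw := hwrap (List.cons_ne_nil _ _)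
    have h2 : (y :: t).getLast (List.cons_ne_nil _ _) = t.getLast htne := List.getLast_cons htne
    have h3 : (y :: t).head (List.cons_ne_nil _ _) = y := rfl
    rw [h2, h3] at hw
    exact hw.symm



lemma list_diff_head {a : V} {r : List V} (hnotmem : a ∉ r) :
    ({x | x ∈ a :: r} : Set V) \ {a} = {x | x ∈ r} := by
  ext x
  simp only [Set.mem_diff, Set.mem_setOf_eq, Set.mem_singleton_iff]
  constructor
  · rintro ⟨hx, hne⟩
    rcases List.mem_cons.mp hx with rfl | hmem
    · exact absurd rfl hne
    · exact hmem
  · intro h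
    exact ⟨List.mem_cons_of_mem _ h, fun hx => hnotmem (hx ▸ h)⟩

lemma cnt_path : ∀ (m : ℕ) (l : List V), l.length = m → l.Nodup → l.Chain' G.Adj →
    cnt G {x | x ∈ l} ≤ Nat.fib (m + 2) := by
  intro m
  induction m using Nat.strong_induction_on with
  | _ m ih =>
    intro l hlen hnd hch
    match l, hlen with
    | [], hlen =>
      have he : ({x | x ∈ ([] : List V)} : Set V) = ∅ := by ext x; simp
      rw [he, cnt_empty, ← hlen]
      simp [Nat.fib]
    | [a], hlen =>
      have h0 : (∅ : Set V) ⊆ {x | x ∈ [a]} := Set.empty_subset _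
      have h1 := cnt_le_pow_mul (G := G) h0
      rw [cnt_empty, one_mul] at h1
      have h2 : ({x | x ∈ [a]} : Set V) \ ∅ = {a} := by ext x; simp
      rw [h2] at h1
      have h3 : ({a} : Set V).ncard = 1 := Set.ncard_singleton a
      rw [h3] at h1
      calc cnt G {x | x ∈ [a]} ≤ 2 ^ 1 := h1
        _ ≤ Nat.fib (m + 2) := by rw [← hlen]; simp [Nat.fib]
    | a :: b :: t, hlen =>
      have ha : a ∈ ({x | x ∈ a :: b :: t} : Set V) := by simp
      rw [cnt_split ha]
      have hnotmem : a ∉ b :: t := (List.nodup_cons.mp hnd).1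
      have h1 := list_diff_head (V := V) hnotmem
      have h2 : ({x | x ∈ a :: b :: t} : Set V) \ {x | x = a ∨ G.Adj a x} ⊆ {x | x ∈ t} := by
        rintro x ⟨hx, hnx⟩
        simp only [Set.mem_setOf_eq, not_or] at hnx
        rcases List.mem_cons.mp hx with rfl | hx
        · exact absurd rfl hnx.1
        · rcases List.mem_cons.mp hx with rfl | hx
          · exact absurd (List.isChain_cons_cons.mp hch).1 hnx.2
          · exact hx
      have hm : m = t.length + 2 := by rw [← hlen]; simp
      have ihb := ih (t.length + 1) (by omega) (b :: t) (by simp) (List.nodup_cons.mp hnd).2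
        (List.isChain_cons_cons.mp hch).2
      have iht := ih t.length (by omega) t rfl (List.nodup_cons.mp (List.nodup_cons.mp hnd).2).2
        ((List.isChain_cons_cons.mp hch).2.tail)
      have h2' := (cnt_mono (G := G) h2).trans iht
      rw [h1]
      have e1 : t.length + 1 + 2 = t.length + 3 := by omega
      rw [e1] at ihb
      have hfib : Nat.fib (t.length + 2 + 2) = Nat.fib (t.length + 3) + Nat.fib (t.length + 2) := by
        have hf := Nat.fib_add_two (n := t.length + 2)
        have e3 : t.length + 2 + 1 = t.length + 3 := by omega
        rw [e3] at hf
        omega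
      rw [hm, hfib]
      omega

lemma cnt_cycle (l : List V) (hl : IsCycList G l) (hlen3 : 3 ≤ l.length) :
    cnt G {x | x ∈ l} ≤ Nat.fib (l.length + 1) + Nat.fib (l.length - 1) := by
  obtain ⟨hnd, hch, hwrap⟩ := hl
  match l with
  | a :: b :: c :: t =>
    set t' : List V := c :: t with ht'
    have hne : (a :: b :: t' : List V) ≠ [] := List.cons_ne_nil _ _
    have ht'ne : t' ≠ [] := List.cons_ne_nil _ _
    have hbt'ne : (b :: t' : List V) ≠ [] := List.cons_ne_nil _ _
    have ha : a ∈ ({x | x ∈ a :: b :: t'} : Set V) := by simp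
    rw [cnt_split ha]
    have hnotmem : a ∉ b :: t' := (List.nodup_cons.mp hnd).1
    have h1 := list_diff_head (V := V) hnotmem
    have hlast_eq : (a :: b :: t').getLast hne = t'.getLast ht'ne := by
      rw [List.getLast_cons hbt'ne, List.getLast_cons ht'ne]
    have hadj_last : G.Adj a (t'.getLast ht'ne) := by
      have hw := hwrap hne
      rw [hlast_eq] at hw
      exact hw.symm
    have h2 : ({x | x ∈ a :: b :: t'} : Set V) \ {x | x = a ∨ G.Adj a x} ⊆
        {x | x ∈ t'.dropLast} := by
      rintro x ⟨hx, hnx⟩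
      simp only [Set.mem_setOf_eq, not_or] at hnx
      rcases List.mem_cons.mp hx with rfl | hx
      · exact absurd rfl hnx.1
      · rcases List.mem_cons.mp hx with rfl | hx
        · exact absurd (List.isChain_cons_cons.mp hch).1 hnx.2
        · have hxlast : x ≠ t'.getLast ht'ne := by
            rintro rfl
            exact hnx.2 hadj_last
          have hdl := List.dropLast_append_getLast ht'ne
          rw [← hdl] at hx
          rcases List.mem_append.mp hx with h | h
          · exact h
          · simp only [List.mem_singleton] at h
            exact absurd h hxlast
    have path1 : cnt G {x | x ∈ b :: t'} ≤ Nat.fib ((b :: t').length + 2) :=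
      cnt_path _ _ rfl (List.nodup_cons.mp hnd).2 (List.isChain_cons_cons.mp hch).2
    have path2 : cnt G {x | x ∈ t'.dropLast} ≤ Nat.fib (t'.dropLast.length + 2) := by
      refine cnt_path _ _ rfl ?_ ?_
      · exact ((List.nodup_cons.mp (List.nodup_cons.mp hnd).2).2).sublist t'.dropLast_sublist
      · exact ((List.isChain_cons_cons.mp (List.isChain_cons_cons.mp hch).2).2).prefix t'.dropLast_prefix
    have h2' := (cnt_mono (G := G) h2).trans path2
    rw [h1]
    have hL1 : (b :: t').length + 2 = t.length + 4 := by simp [ht']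
    have hL2 : t'.dropLast.length + 2 = t.length + 2 := by
      rw [List.length_dropLast]
      simp [ht']
    have hL3 : (a :: b :: t').length + 1 = t.length + 4 := by simp [ht']
    have hL4 : (a :: b :: t').length - 1 = t.length + 2 := by simp [ht']
    rw [hL1] at path1
    rw [hL2] at h2'
    rw [hL3, hL4]
    omega


lemma rtg_avoid_aux {r : V → V → Prop} (hsymm : Symmetric r) {v w : V}
    (hv : ∀ x, r v x → x = w) :
    ∀ (n : ℕ) (l : List V), l.length ≤ n → ∀ (u1 u2 : V), u1 ≠ v → u2 ≠ v →
      List.Chain r u1 l → (u1 :: l).getLast (List.cons_ne_nil _ _) = u2 →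
      Relation.ReflTransGen (fun a b => r a b ∧ a ≠ v ∧ b ≠ v) u1 u2 := by
  intro n
  induction n with
  | zero =>
    intro l hln u1 u2 h1 h2 hch hlast
    have hl0 : l = [] := List.length_eq_zero_iff.mp (Nat.le_zero.mp hln)
    subst hl0
    have he : u1 = u2 := hlast
    exact he ▸ Relation.ReflTransGen.refl
  | succ n ihn =>
    intro l hln u1 u2 h1 h2 hch hlast
    rcases l with _ | ⟨c, t⟩
    · have he : u1 = u2 := hlast
      exact he ▸ Relation.ReflTransGen.refl
    · have hr : r u1 c := (List.chain_cons.mp hch).1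
      have hct : List.Chain r c t := (List.chain_cons.mp hch).2
      have hlast' : (c :: t).getLast (List.cons_ne_nil _ _) = u2 := by
        rw [← hlast]
        exact (List.getLast_cons (List.cons_ne_nil _ _)).symm
      simp only [List.length_cons] at hln
      by_cases hc : c = v
      · subst hc
        rcases t with _ | ⟨d, t'⟩
        · exact absurd hlast'.symm h2
        · have hd : d = w := hv d (List.chain_cons.mp hct).1
          have hu1 : u1 = w := hv u1 (hsymm hr)
          have hdu : d = u1 := by rw [hd, hu1]
          subst hdu
          have hlast'' : (d :: t').getLast (List.cons_ne_nil _ _) = u2 := by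
            rw [← hlast']
            exact (List.getLast_cons (List.cons_ne_nil _ _)).symm
          simp only [List.length_cons] at hln
          exact ihn t' (by omega) d u2 h1 h2 (List.chain_cons.mp hct).2 hlast''
      · exact Relation.ReflTransGen.head ⟨hr, h1, hc⟩ (ihn t (by omega) c u2 hc h2 hct hlast')

lemma rtg_avoid {r : V → V → Prop} (hsymm : Symmetric r) {v w : V}
    (hv : ∀ x, r v x → x = w) {u1 u2 : V} (h1 : u1 ≠ v) (h2 : u2 ≠ v)
    (h : Relation.ReflTransGen r u1 u2) :
    Relation.ReflTransGen (fun a b => r a b ∧ a ≠ v ∧ b ≠ v) u1 u2 := by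
  obtain ⟨l, hch, hlast⟩ := List.exists_isChain_cons_of_relationReflTransGen h
  exact rtg_avoid_aux hsymm hv l.length l le_rfl u1 u2 h1 h2 hch hlast

def nbrs (G : SimpleGraph V) (A : Set V) (v : V) : Set V := {u | u ∈ A ∧ G.Adj v u}

lemma mem_nbrs {A : Set V} {v u : V} : u ∈ nbrs G A v ↔ u ∈ A ∧ G.Adj v u := Iff.rfl

noncomputable def degA (G : SimpleGraph V) (A : Set V) (v : V) : ℕ := (nbrs G A v).ncard

noncomputable def pairsCnt (G : SimpleGraph V) (A : Set V) : ℕ :=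
  {p : V × V | p.1 ∈ A ∧ p.2 ∈ A ∧ G.Adj p.1 p.2}.ncard

lemma pairs_eq_sum (A : Set V) [Fintype ↥A] :
    pairsCnt G A = ∑ v ∈ A.toFinset, degA G A v := by
  classical
  rw [pairsCnt, Set.ncard_eq_toFinset_card']
  have hset : {p : V × V | p.1 ∈ A ∧ p.2 ∈ A ∧ G.Adj p.1 p.2}.toFinset =
      A.toFinset.biUnion (fun v => ({v} : Finset V) ×ˢ (nbrs G A v).toFinset) := by
    ext p
    simp only [Set.mem_toFinset, Set.mem_setOf_eq, Finset.mem_biUnion, Finset.mem_product,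
      Finset.mem_singleton, mem_nbrs]
    constructor
    · rintro ⟨h1, h2, h3⟩
      exact ⟨p.1, h1, rfl, mem_nbrs.mpr ⟨h2, h3⟩⟩
    · rintro ⟨v, hvA, rfl, hp2⟩
      have h4 := mem_nbrs.mp hp2
      exact ⟨hvA, h4.1, h4.2⟩
  rw [hset, Finset.card_biUnion]
  · apply Finset.sum_congr rfl
    intro v _
    rw [Finset.card_product, Finset.card_singleton, one_mul, degA, Set.ncard_eq_toFinset_card']
  · intro v _ u _ hvu
    simp only [Finset.disjoint_left]
    rintro p hp hq
    simp only [Finset.mem_product, Finset.mem_singleton] at hp hq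
    exact hvu (hp.1 ▸ hq.1.symm ▸ rfl)

lemma pairsCnt_univ : pairsCnt G Set.univ = 2 * G.edgeSet.ncard := by
  classical
  rw [pairs_eq_sum]
  have hdeg : ∀ v, degA G Set.univ v = G.degree v := by
    intro v
    rw [degA, ← SimpleGraph.card_neighborFinset_eq_degree]
    have hn : nbrs G Set.univ v = G.neighborSet v := by
      ext u
      simp only [nbrs, Set.mem_setOf_eq, Set.mem_univ, true_and, SimpleGraph.mem_neighborSet]
    rw [hn, Set.ncard_eq_toFinset_card', SimpleGraph.neighborFinset_def]
  have hedge : G.edgeSet.ncard = G.edgeFinset.card := by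
    rw [← SimpleGraph.coe_edgeFinset, Set.ncard_coe_finset]
  rw [hedge, ← SimpleGraph.sum_degrees_eq_twice_card_edges, Set.toFinset_univ]
  exact Finset.sum_congr rfl (fun v _ => hdeg v)


lemma main_ind (k : ℕ) (hk3 : 3 ≤ k) :
    ∀ (n : ℕ) (A : Set V) (l : List V), A.ncard = n →
      IsCycList G l → l.length = k → (∀ y ∈ l, y ∈ A) →
      (∀ u1 ∈ A, ∀ u2 ∈ A, Relation.ReflTransGen (fun a b => a ∈ A ∧ b ∈ A ∧ G.Adj a b) u1 u2) →
      pairsCnt G A ≤ 2 * n →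
      cnt G A ≤ 2 ^ (n - k) * Nat.fib (k + 1) + Nat.fib (k - 1) := by
  intro n
  induction n using Nat.strong_induction_on with
  | _ n ih =>
  intro A l hA hcyc hlen hsub hconn hpairs
  classical
  have hlne : l ≠ [] := by rintro rfl; simp at hlen; omega
  have hl3 : 3 ≤ l.length := by rw [hlen]; exact hk3
  have hAfin : A.Finite := Set.toFinite A
  have hlsub : {x | x ∈ l} ⊆ A := fun x hx => hsub x hx
  have hlset_card : ({x | x ∈ l} : Set V).ncard = k := by
    rw [← List.coe_toFinset, Set.ncard_coe_finset, List.toFinset_card_of_nodup hcyc.1, hlen]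
  have hkn : k ≤ n := by
    have := Set.ncard_le_ncard hlsub hAfin
    rw [hlset_card, hA] at this
    exact this
  have hcycdeg : ∀ y ∈ l, 2 ≤ degA G A y := by
    intro y hy
    obtain ⟨n1, n2, h12, hn1, hn2, ha1, ha2⟩ := cyc_two_nbrs hcyc hl3 hy
    have hsubset : ({n1, n2} : Set V) ⊆ nbrs G A y := by
      rintro x (rfl | rfl)
      · exact ⟨hsub _ hn1, ha1⟩
      · exact ⟨hsub _ hn2, ha2⟩
    calc 2 = ({n1, n2} : Set V).ncard := (Set.ncard_pair h12).symm
      _ ≤ degA G A y := Set.ncard_le_ncard hsubset (Set.toFinite _)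
  by_cases hleaf : ∃ v ∈ A, degA G A v ≤ 1
  · -- leaf case
    obtain ⟨v, hvA, hdv⟩ := hleaf
    have h1n : 1 < A.ncard := by rw [hA]; omega
    obtain ⟨u, huA, hune⟩ := Set.exists_ne_of_one_lt_ncard h1n v
    have hreach := hconn v hvA u huA
    have hnbne : (nbrs G A v).Nonempty := by
      rcases Relation.ReflTransGen.cases_head hreach with heq | ⟨c, ⟨_, hcA, hadj⟩, _⟩
      · exact absurd heq.symm hune
      · exact ⟨c, hcA, hadj⟩
    have hdeg1 : degA G A v = 1 := by
      have hpos : 0 < degA G A v := (Set.ncard_pos (Set.toFinite _)).mpr hnbne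
      omega
    obtain ⟨w, hw⟩ := Set.ncard_eq_one.mp hdeg1
    have hwmem : w ∈ nbrs G A v := by rw [hw]; exact rfl
    have hwA : w ∈ A := hwmem.1
    have hadjvw : G.Adj v w := hwmem.2
    have hvw : v ≠ w := fun h => G.loopless.irrefl v (h ▸ hadjvw)
    have hvl : v ∉ l := fun hvl => by have := hcycdeg v hvl; omega
    have hvlset : v ∉ ({x | x ∈ l} : Set V) := hvl
    have hkn1 : k + 1 ≤ n := by
      have hins : insert v {x | x ∈ l} ⊆ A := Set.insert_subset hvA hlsub
      have hcard : (insert v {x | x ∈ l} : Set V).ncard = k + 1 := by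
        rw [Set.ncard_insert_of_notMem hvlset (Set.toFinite _), hlset_card]
      have := Set.ncard_le_ncard hins hAfin
      rw [hcard, hA] at this
      exact this
    have hA'card : (A \ {v}).ncard = n - 1 := by
      rw [Set.ncard_diff_singleton_of_mem hvA, hA]
    have hsub' : ∀ y ∈ l, y ∈ A \ {v} := fun y hy =>
      ⟨hsub y hy, fun he => hvl (Set.mem_singleton_iff.mp he ▸ hy)⟩
    have hconn' : ∀ u1 ∈ A \ {v}, ∀ u2 ∈ A \ {v},
        Relation.ReflTransGen (fun a b => a ∈ A \ {v} ∧ b ∈ A \ {v} ∧ G.Adj a b) u1 u2 := by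
      intro u1 hu1 u2 hu2
      have hsymm : Symmetric (fun a b => a ∈ A ∧ b ∈ A ∧ G.Adj a b) :=
        fun a b ⟨ha, hb, hadj⟩ => ⟨hb, ha, hadj.symm⟩
      have hv' : ∀ x, (fun a b => a ∈ A ∧ b ∈ A ∧ G.Adj a b) v x → x = w := by
        rintro x ⟨_, hxA, hadj⟩
        have : x ∈ nbrs G A v := ⟨hxA, hadj⟩
        rw [hw] at this
        exact this
      have h0 := hconn u1 hu1.1 u2 hu2.1
      have h2 := rtg_avoid hsymm hv' (fun he => hu1.2 (Set.mem_singleton_iff.mpr he))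
        (fun he => hu2.2 (Set.mem_singleton_iff.mpr he)) h0
      refine Relation.ReflTransGen.mono ?_ _ _ h2
      rintro a b ⟨⟨haA, hbA, hadj⟩, hav, hbv⟩
      exact ⟨⟨haA, hav⟩, ⟨hbA, hbv⟩, hadj⟩
    have hpairs' : pairsCnt G (A \ {v}) ≤ 2 * (n - 1) := by
      have hvwne : ((v, w) : V × V) ≠ (w, v) := fun h => hvw (congrArg Prod.fst h)
      have hwvS : ((w, v) : V × V) ∉ {p : V × V | p.1 ∈ A \ {v} ∧ p.2 ∈ A \ {v} ∧ G.Adj p.1 p.2} := by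
        rintro ⟨_, h2, _⟩
        exact h2.2 rfl
      have hvwS : ((v, w) : V × V) ∉
          insert ((w, v) : V × V) {p : V × V | p.1 ∈ A \ {v} ∧ p.2 ∈ A \ {v} ∧ G.Adj p.1 p.2} := by
        rintro (h | ⟨h1, _, _⟩)
        · exact hvwne h
        · exact h1.2 rfl
      have hsubT : insert ((v, w) : V × V)
          (insert ((w, v) : V × V) {p : V × V | p.1 ∈ A \ {v} ∧ p.2 ∈ A \ {v} ∧ G.Adj p.1 p.2}) ⊆
          {p : V × V | p.1 ∈ A ∧ p.2 ∈ A ∧ G.Adj p.1 p.2} := by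
        rintro p (rfl | rfl | ⟨h1, h2, h3⟩)
        · exact ⟨hvA, hwA, hadjvw⟩
        · exact ⟨hwA, hvA, hadjvw.symm⟩
        · exact ⟨h1.1, h2.1, h3⟩
      have hcard2 : (insert ((v, w) : V × V)
          (insert ((w, v) : V × V) {p : V × V | p.1 ∈ A \ {v} ∧ p.2 ∈ A \ {v} ∧ G.Adj p.1 p.2})).ncard =
          pairsCnt G (A \ {v}) + 2 := by
        rw [Set.ncard_insert_of_notMem hvwS (Set.toFinite _),
          Set.ncard_insert_of_notMem hwvS (Set.toFinite _)]
        rfl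
      have hle := Set.ncard_le_ncard hsubT (Set.toFinite _)
      rw [hcard2] at hle
      have : pairsCnt G (A \ {v}) + 2 ≤ 2 * n := le_trans hle hpairs
      omega
    have hIH := ih (n - 1) (by omega) (A \ {v}) l hA'card hcyc hlen hsub' hconn' hpairs'
    have hsplit := cnt_split (G := G) hvA
    have hNv : A \ {x | x = v ∨ G.Adj v x} = A \ {v, w} := by
      ext x
      simp only [Set.mem_diff, Set.mem_setOf_eq, Set.mem_insert_iff, Set.mem_singleton_iff, not_or]
      constructor
      · rintro ⟨hxA, h1, h2⟩
        refine ⟨hxA, h1, fun he => ?_⟩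
        exact h2 (he ▸ hadjvw)
      · rintro ⟨hxA, h1, h2⟩
        refine ⟨hxA, h1, fun hadj => ?_⟩
        have : x ∈ nbrs G A v := ⟨hxA, hadj⟩
        rw [hw] at this
        exact h2 this
    have hwA' : w ∈ A \ {v} := ⟨hwA, fun he => hvw (Set.mem_singleton_iff.mp he).symm⟩
    have hAvw : A \ {v, w} = (A \ {v}) \ {w} := by
      ext x
      simp only [Set.mem_diff, Set.mem_insert_iff, Set.mem_singleton_iff, not_or]
      tauto
    have hAvw_card : (A \ {v, w}).ncard = n - 2 := by
      rw [hAvw, Set.ncard_diff_singleton_of_mem hwA', hA'card]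
      omega
    rw [hsplit, hNv]
    by_cases hwl : w ∈ l
    · -- w on the cycle
      obtain ⟨m, hmem, hmlen, hcycm, t, hm⟩ := exists_rotate_head (G := G) hwl
      have hcycm' := hcycm hcyc
      subst hm
      have hndt : t.Nodup := (List.nodup_cons.mp hcycm'.1).2
      have hwt : w ∉ t := (List.nodup_cons.mp hcycm'.1).1
      have hcht : t.Chain' G.Adj := hcycm'.2.1.tail
      have htlen : t.length = k - 1 := by
        simp only [List.length_cons] at hmlen
        omega
      have htsub : ({x | x ∈ t} : Set V) ⊆ A \ {v, w} := by
        intro x hx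
        have hxl : x ∈ l := (hmem x).mp (List.mem_cons_of_mem _ hx)
        refine ⟨hsub x hxl, ?_⟩
        simp only [Set.mem_insert_iff, Set.mem_singleton_iff, not_or]
        exact ⟨fun he => hvl (he ▸ hxl), fun he => hwt (he ▸ hx)⟩
      have htcard : ({x | x ∈ t} : Set V).ncard = k - 1 := by
        rw [← List.coe_toFinset, Set.ncard_coe_finset, List.toFinset_card_of_nodup hndt, htlen]
      have hbound := cnt_le_pow_mul (G := G) htsub
      have hdiffcard : ((A \ {v, w}) \ {x | x ∈ t}).ncard = n - 2 - (k - 1) := by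
        rw [Set.ncard_diff htsub, hAvw_card, htcard]
      have hpatht := cnt_path (G := G) (k - 1) t htlen hndt hcht
      have hfe : k - 1 + 2 = k + 1 := by omega
      rw [hfe] at hpatht
      have hBbound : cnt G (A \ {v, w}) ≤ Nat.fib (k + 1) * 2 ^ (n - 1 - k) := by
        have he2 : n - 2 - (k - 1) = n - 1 - k := by omega
        rw [hdiffcard, he2] at hbound
        calc cnt G (A \ {v, w}) ≤ cnt G {x | x ∈ t} * 2 ^ (n - 1 - k) := hbound
          _ ≤ Nat.fib (k + 1) * 2 ^ (n - 1 - k) :=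
            Nat.mul_le_mul_right _ hpatht
      have hpow : 2 ^ (n - k) = 2 ^ (n - 1 - k) * 2 := by
        rw [← pow_succ]
        congr 1
        omega
      calc cnt G (A \ {v}) + cnt G (A \ {v, w})
          ≤ (2 ^ (n - 1 - k) * Nat.fib (k + 1) + Nat.fib (k - 1)) +
            Nat.fib (k + 1) * 2 ^ (n - 1 - k) := Nat.add_le_add hIH hBbound
        _ = 2 ^ (n - k) * Nat.fib (k + 1) + Nat.fib (k - 1) := by rw [hpow]; ring
    · -- w off the cycle
      have hkn2 : k + 2 ≤ n := by
        have hwlset : w ∉ ({x | x ∈ l} : Set V) := hwl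
        have hvins : v ∉ insert w ({x | x ∈ l} : Set V) := by
          simp only [Set.mem_insert_iff]
          rintro (rfl | h)
          · exact hvw rfl
          · exact hvl h
        have hins : insert v (insert w ({x | x ∈ l} : Set V)) ⊆ A :=
          Set.insert_subset hvA (Set.insert_subset hwA hlsub)
        have hcard : (insert v (insert w ({x | x ∈ l} : Set V))).ncard = k + 2 := by
          rw [Set.ncard_insert_of_notMem hvins (Set.toFinite _),
            Set.ncard_insert_of_notMem hwlset (Set.toFinite _), hlset_card]
        have := Set.ncard_le_ncard hins hAfin
        rw [hcard, hA] at this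
        exact this
      have hlsub2 : ({x | x ∈ l} : Set V) ⊆ A \ {v, w} := by
        intro x hx
        refine ⟨hlsub hx, ?_⟩
        simp only [Set.mem_insert_iff, Set.mem_singleton_iff, not_or]
        exact ⟨fun he => hvl (he ▸ hx), fun he => hwl (he ▸ hx)⟩
      have hbound := cnt_le_pow_mul (G := G) hlsub2
      have hdiffcard : ((A \ {v, w}) \ {x | x ∈ l}).ncard = n - 2 - k := by
        rw [Set.ncard_diff hlsub2, hAvw_card, hlset_card]
      have hcycbound := cnt_cycle l hcyc hl3
      rw [hlen] at hcycbound
      have hBbound : cnt G (A \ {v, w}) ≤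
          (Nat.fib (k + 1) + Nat.fib (k - 1)) * 2 ^ (n - 2 - k) := by
        rw [hdiffcard] at hbound
        calc cnt G (A \ {v, w}) ≤ cnt G {x | x ∈ l} * 2 ^ (n - 2 - k) := hbound
          _ ≤ (Nat.fib (k + 1) + Nat.fib (k - 1)) * 2 ^ (n - 2 - k) :=
            Nat.mul_le_mul_right _ hcycbound
      have hfF : Nat.fib (k - 1) ≤ Nat.fib (k + 1) := Nat.fib_mono (by omega)
      have hpow1 : 2 ^ (n - 1 - k) = 2 * 2 ^ (n - 2 - k) := by
        rw [← pow_succ']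
        congr 1
        omega
      have hpow2 : 2 ^ (n - k) = 4 * 2 ^ (n - 2 - k) := by
        have : (4 : ℕ) = 2 ^ 2 := by norm_num
        rw [this, ← pow_add]
        congr 1
        omega
      calc cnt G (A \ {v}) + cnt G (A \ {v, w})
          ≤ (2 ^ (n - 1 - k) * Nat.fib (k + 1) + Nat.fib (k - 1)) +
            (Nat.fib (k + 1) + Nat.fib (k - 1)) * 2 ^ (n - 2 - k) := Nat.add_le_add hIH hBbound
        _ = 3 * (2 ^ (n - 2 - k) * Nat.fib (k + 1)) + Nat.fib (k - 1) * 2 ^ (n - 2 - k) +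
              Nat.fib (k - 1) := by rw [hpow1]; ring
        _ ≤ 3 * (2 ^ (n - 2 - k) * Nat.fib (k + 1)) + Nat.fib (k + 1) * 2 ^ (n - 2 - k) +
              Nat.fib (k - 1) := by
            have := Nat.mul_le_mul_right (2 ^ (n - 2 - k)) hfF
            omega
        _ = 2 ^ (n - k) * Nat.fib (k + 1) + Nat.fib (k - 1) := by rw [hpow2]; ring
  · -- no leaf: A is exactly the cycle
    push_neg at hleaf
    have hdeg2 : ∀ v ∈ A, 2 ≤ degA G A v := fun v hv => hleaf v hv
    classical
    have hfinA : Fintype ↥A := hAfin.fintype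
    have hsum : pairsCnt G A = ∑ v ∈ A.toFinset, degA G A v := pairs_eq_sum A
    have hcardA : A.toFinset.card = n := by rw [← Set.ncard_eq_toFinset_card', hA]
    have hall2 : ∀ v ∈ A, degA G A v = 2 := by
      intro v hv
      by_contra hne
      have hv3 : 3 ≤ degA G A v := by
        have := hdeg2 v hv
        omega
      have hlt : ∑ _x ∈ A.toFinset, 2 < ∑ x ∈ A.toFinset, degA G A x := by
        refine Finset.sum_lt_sum (fun i hi => hdeg2 i (Set.mem_toFinset.mp hi)) ?_
        exact ⟨v, Set.mem_toFinset.mpr hv, by omega⟩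
      rw [Finset.sum_const, smul_eq_mul, hcardA] at hlt
      rw [hsum] at hpairs
      omega
    have hclosed : ∀ y ∈ l, ∀ z, z ∈ A → G.Adj y z → z ∈ l := by
      intro y hy z hzA hadj
      obtain ⟨n1, n2, h12, hn1, hn2, ha1, ha2⟩ := cyc_two_nbrs hcyc hl3 hy
      have hsubset : ({n1, n2} : Set V) ⊆ nbrs G A y := by
        rintro x (rfl | rfl)
        · exact ⟨hsub _ hn1, ha1⟩
        · exact ⟨hsub _ hn2, ha2⟩
      have hncard : (nbrs G A y).ncard ≤ ({n1, n2} : Set V).ncard := by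
        rw [Set.ncard_pair h12]
        rw [← degA]  -- degA G A y = 2
        rw [hall2 y (hsub y hy)]
      have heq : ({n1, n2} : Set V) = nbrs G A y :=
        Set.eq_of_subset_of_ncard_le hsubset hncard (Set.toFinite _)
      have hz : z ∈ nbrs G A y := ⟨hzA, hadj⟩
      rw [← heq] at hz
      rcases hz with rfl | hz
      · exact hn1
      · exact (Set.mem_singleton_iff.mp hz) ▸ hn2
    have hAl : A = {x | x ∈ l} := by
      refine Set.Subset.antisymm ?_ hlsub
      intro u huA
      have hhead : l.head hlne ∈ A := hsub _ (List.head_mem hlne)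
      have hr := hconn (l.head hlne) hhead u huA
      clear hsum
      induction hr with
      | refl => exact List.head_mem hlne
      | tail _ hstep ihr =>
        exact hclosed _ (ihr hstep.1) _ hstep.2.1 hstep.2.2
    have hnk : n = k := by rw [← hA, hAl, hlset_card]
    have hcnt := cnt_cycle l hcyc hl3
    rw [hlen] at hcnt
    rw [hAl.symm] at hcnt
    calc cnt G A ≤ Nat.fib (k + 1) + Nat.fib (k - 1) := hcnt
      _ ≤ 2 ^ (n - k) * Nat.fib (k + 1) + Nat.fib (k - 1) := by
        have h1 : 1 ≤ 2 ^ (n - k) := Nat.one_le_two_pow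
        have h2 : Nat.fib (k + 1) ≤ 2 ^ (n - k) * Nat.fib (k + 1) := by
          calc Nat.fib (k + 1) = 1 * Nat.fib (k + 1) := (one_mul _).symm
            _ ≤ 2 ^ (n - k) * Nat.fib (k + 1) := Nat.mul_le_mul_right _ h1
        omega


lemma numIndepSets_eq_cnt : numIndepSets G = cnt G Set.univ :=
  Nat.card_congr (Equiv.subtypeEquivRight (fun s =>
    ⟨fun (h : IndepIn G s) => ⟨Set.subset_univ s, h⟩, fun h => h.2⟩))

end UniHelp

open UniHelp

theorem stmt7 {V : Type*} [Fintype V] (G : SimpleGraph V) (n k : ℕ)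
    (hconn : G.Connected) (hn : Fintype.card V = n)
    (hunicyclic : G.edgeSet.ncard = n) (hgirth : G.girth = k) :
    numIndepSets G ≤ 2 ^ (n - k) * Nat.fib (k + 1) + Nat.fib (k - 1) := by
  classical
  by_cases hac : G.IsAcyclic
  · have hk0 : k = 0 := by rw [← hgirth]; exact hac.girth_eq_zero
    subst hk0
    have h1 : numIndepSets G ≤ Nat.card (Set V) := Finite.card_subtype_le _
    have h2 : Nat.card (Set V) = 2 ^ n := by
      rw [Nat.card_eq_fintype_card, Fintype.card_set, hn]
    calc numIndepSets G ≤ 2 ^ n := h2 ▸ h1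
      _ ≤ 2 ^ (n - 0) * Nat.fib (0 + 1) + Nat.fib (0 - 1) := by simp
  · obtain ⟨a, wlk, hwcyc, hglen⟩ := SimpleGraph.exists_girth_eq_length.mpr hac
    have hk : wlk.length = k := by rw [← hglen, hgirth]
    have hk3 : 3 ≤ k := by rw [← hk]; exact hwcyc.three_le_length
    obtain ⟨l, hl⟩ : ∃ l : List V, wlk.support.tail = l := ⟨_, rfl⟩
    have hsupp : wlk.support = a :: l := by
      rw [← hl]
      exact wlk.support_eq_cons
    have hlen : l.length = k := by
      have := wlk.length_support
      rw [hsupp] at this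
      simp only [List.length_cons] at this
      omega
    have hlne : l ≠ [] := by
      intro h
      rw [h] at hlen
      simp at hlen
      omega
    have hnd : l.Nodup := hl ▸ hwcyc.support_nodup
    have hch' : (a :: l).Chain' G.Adj := hsupp ▸ wlk.isChain_adj_support
    have hch : l.Chain' G.Adj := hch'.tail
    have hadj_head : G.Adj a (l.head hlne) := by
      have hht : l.head hlne :: l.tail = l := List.cons_head_tail hlne
      rw [← hht] at hch'
      exact (List.isChain_cons_cons.mp hch').1
    have hlast : l.getLast hlne = a := by
      have h1 : wlk.support.getLast? = some a := by
        rw [List.getLast?_eq_getLast_of_ne_nil (by simp [hsupp])]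
        exact congrArg some wlk.getLast_support
      have h2 : wlk.support.getLast? = l.getLast? := by
        rw [hsupp]
        rcases l with _ | ⟨b, t⟩
        · exact absurd rfl hlne
        · exact List.getLast?_cons_cons
      rw [h2, List.getLast?_eq_getLast_of_ne_nil hlne] at h1
      exact Option.some.inj h1
    have hcyc : IsCycList G l := by
      refine ⟨hnd, hch, fun h => ?_⟩
      rw [hlast]
      exact hadj_head
    have hAcard : (Set.univ : Set V).ncard = n := by
      rw [Set.ncard_univ, Nat.card_eq_fintype_card, hn]
    have hsub : ∀ y ∈ l, y ∈ (Set.univ : Set V) := fun y _ => Set.mem_univ y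
    have hconn' : ∀ u1 ∈ (Set.univ : Set V), ∀ u2 ∈ (Set.univ : Set V),
        Relation.ReflTransGen (fun a b => a ∈ (Set.univ : Set V) ∧ b ∈ (Set.univ : Set V) ∧ G.Adj a b) u1 u2 := by
      intro u1 _ u2 _
      have hr : Relation.ReflTransGen G.Adj u1 u2 :=
        (SimpleGraph.reachable_iff_reflTransGen u1 u2).mp (hconn.preconnected u1 u2)
      exact Relation.ReflTransGen.mono (fun a b h => ⟨Set.mem_univ a, Set.mem_univ b, h⟩) _ _ hr
    have hpairs : pairsCnt G (Set.univ : Set V) ≤ 2 * n := by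
      rw [pairsCnt_univ, hunicyclic]
    rw [numIndepSets_eq_cnt]
    exact main_ind k hk3 n Set.univ l hAcard hcyc hlen hsub hconn' hpairs
end

section
/- If G is a connected bipartite graph on n vertices with girth g ≥ 4, then i(G) ≤ 2^{n-g} F_{g+1} + F_{g-1}. -/
open SimpleGraph Finset
open scoped Classical

/-! ### Counting subsets with no two consecutive elements -/

lemma path_count (m : ℕ) :
    ((range m).powerset.filter (fun A => ∀ x ∈ A, x + 1 ∉ A)).card ≤ Nat.fib (m + 2) := by
  induction m using Nat.strong_induction_on with
  | _ m IH =>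
  match m with
  | 0 =>
    apply le_trans (Finset.card_filter_le _ _)
    simp [Nat.fib]
  | 1 =>
    apply le_trans (Finset.card_filter_le _ _)
    simp only [Finset.card_powerset, Finset.card_range]
    norm_num [Nat.fib]
  | (m+2) =>
    have hsplit := Finset.card_filter_add_card_filter_not
      (s := (range (m+2)).powerset.filter (fun A => ∀ x ∈ A, x + 1 ∉ A))
      (p := fun A => m + 1 ∈ A)
    have h1 : ((((range (m+2)).powerset.filter (fun A => ∀ x ∈ A, x + 1 ∉ A))).filter
        (fun A => m + 1 ∈ A)).card ≤ Nat.fib (m + 2) := by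
      refine le_trans (Finset.card_le_card_of_injOn (t := (range m).powerset.filter
          (fun A => ∀ x ∈ A, x + 1 ∉ A)) (fun A => A.erase (m+1)) ?_ ?_) (IH m (by omega))
      · intro A hA
        simp only [mem_coe, mem_filter, mem_powerset] at hA ⊢
        obtain ⟨⟨hsub, hPA⟩, hm⟩ := hA
        refine ⟨?_, fun x hx => ?_⟩
        · intro x hx
          rw [Finset.mem_erase] at hx
          have := hsub hx.2
          rw [Finset.mem_range] at this ⊢
          rcases Nat.lt_or_ge x m with h | h
          · exact h
          · exfalso
            have hxc : x = m ∨ x = m + 1 := by omega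
            rcases hxc with rfl | rfl
            · exact hPA x hx.2 hm
            · exact hx.1 rfl
        · intro hx1
          rw [Finset.mem_erase] at hx hx1
          exact hPA x hx.2 hx1.2
      · intro A hA B hB hAB
        simp only [coe_filter, Set.mem_setOf_eq, mem_filter] at hA hB
        have hAB' : A.erase (m+1) = B.erase (m+1) := hAB
        have : insert (m+1) (A.erase (m+1)) = insert (m+1) (B.erase (m+1)) := by rw [hAB']
        rwa [Finset.insert_erase hA.2, Finset.insert_erase hB.2] at this
    have h2 : ((((range (m+2)).powerset.filter (fun A => ∀ x ∈ A, x + 1 ∉ A))).filter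
        (fun a => m + 1 ∉ a)).card ≤ Nat.fib (m + 2 + 1) := by
      refine le_trans (le_trans (Finset.card_le_card ?_) (IH (m+1) (by omega))) (le_of_eq (by norm_num))
      intro A hA
      simp only [mem_filter, mem_powerset] at hA ⊢
      refine ⟨fun x hx => ?_, hA.1.2⟩
      have := hA.1.1 hx
      rw [Finset.mem_range] at this ⊢
      rcases Nat.lt_or_ge x (m+1) with h | h
      · exact h
      · exfalso; have hx1 : x = m + 1 := by omega
        exact hA.2 (hx1 ▸ hx)
    have hf : Nat.fib (m + 2 + 2) = Nat.fib (m + 2 + 1) + Nat.fib (m + 2) := by rw [Nat.fib_add_two]; omega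
    omega

lemma cyc_window (g k : ℕ) [NeZero g] (hkg : k ≤ g) (t : ZMod g) :
    ((univ : Finset (Finset (ZMod g))).filter
      (fun A => (∀ x ∈ A, x + 1 ∉ A) ∧ ∀ j : ℕ, j < k → t + (j : ZMod g) ∉ A)).card
      ≤ Nat.fib (g - k + 2) := by
  classical
  set φ : ZMod g → ℕ := fun x => (x - t - (k : ZMod g)).val with hφ
  have hcast : ∀ x : ZMod g, ((φ x : ℕ) : ZMod g) = x - t - (k : ZMod g) := fun x =>
    ZMod.natCast_rightInverse _
  have hφinj : Function.Injective φ := by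
    intro x y hxy
    have h1 : x - t - (k : ZMod g) = y - t - (k : ZMod g) := ZMod.val_injective g hxy
    exact sub_left_inj.mp (sub_left_inj.mp h1)
  refine le_trans (Finset.card_le_card_of_injOn (fun A => A.image φ) ?_ ?_) (path_count (g - k))
  · intro A hA
    simp only [mem_coe, mem_filter, mem_univ, true_and] at hA
    obtain ⟨hcyc, havoid⟩ := hA
    have hsub : ∀ x ∈ A, φ x < g - k := by
      intro x hx
      by_contra hge
      push_neg at hge
      have hlt : φ x < g := ZMod.val_lt _
      set j : ℕ := φ x - (g - k) with hj
      have hjk : j < k := by omega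
      have hφx : φ x = g - k + j := by omega
      have : x = t + (j : ZMod g) := by
        have h2 := hcast x
        rw [hφx] at h2
        have h3 : ((g - k + j : ℕ) : ZMod g) = -(k : ZMod g) + (j : ZMod g) := by
          push_cast [Nat.cast_sub hkg]
          rw [ZMod.natCast_self]
          ring
        rw [h3] at h2
        linear_combination -h2
      exact havoid j hjk (this ▸ hx)
    simp only [mem_coe, mem_powerset, mem_filter]
    constructor
    · intro a ha
      rw [Finset.mem_image] at ha
      obtain ⟨x, hx, rfl⟩ := ha
      rw [Finset.mem_range]
      exact hsub x hx
    · intro a ha ha1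
      rw [Finset.mem_image] at ha ha1
      obtain ⟨x, hx, rfl⟩ := ha
      obtain ⟨y, hy, hxy⟩ := ha1
      have h2 : x - t - (k : ZMod g) + 1 = y - t - (k : ZMod g) := by
        have h4 := hcast y
        rw [hxy] at h4
        push_cast at h4
        rw [hcast x] at h4
        exact h4
      have hyx : y = x + 1 := by linear_combination -h2
      exact hcyc x hx (hyx ▸ hy)
  · intro A hA B hB hAB
    exact Finset.image_injective hφinj hAB

lemma cyc_avoid (g : ℕ) [NeZero g] (hg : 1 ≤ g) (t : ZMod g) :
    ((univ : Finset (Finset (ZMod g))).filter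
      (fun A => (∀ x ∈ A, x + 1 ∉ A) ∧ t ∉ A)).card ≤ Nat.fib (g + 1) := by
  have h := cyc_window g 1 hg t
  have he : g - 1 + 2 = g + 1 := by omega
  rw [he] at h
  refine le_trans (Finset.card_le_card ?_) h
  intro A hA
  simp only [mem_filter, mem_univ, true_and] at hA ⊢
  refine ⟨hA.1, fun j hj => ?_⟩
  interval_cases j
  simpa using hA.2

lemma cyc_all (g : ℕ) [NeZero g] (hg : 4 ≤ g) :
    ((univ : Finset (Finset (ZMod g))).filter (fun A => ∀ x ∈ A, x + 1 ∉ A)).card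
      ≤ Nat.fib (g + 1) + Nat.fib (g - 1) := by
  have hsplit := Finset.card_filter_add_card_filter_not
    (s := (univ : Finset (Finset (ZMod g))).filter (fun A => ∀ x ∈ A, x + 1 ∉ A))
    (p := fun A => (0 : ZMod g) ∈ A)
  have h1 : (((univ : Finset (Finset (ZMod g))).filter (fun A => ∀ x ∈ A, x + 1 ∉ A)).filter
      (fun A => (0 : ZMod g) ∈ A)).card ≤ Nat.fib (g - 1) := by
    have hw := cyc_window g 3 (by omega) (-1)
    have he : g - 3 + 2 = g - 1 := by omega
    rw [he] at hw
    refine le_trans (Finset.card_le_card_of_injOn (fun A => A.erase 0) ?_ ?_) hw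
    · intro A hA
      simp only [mem_coe, mem_filter, mem_univ, true_and] at hA ⊢
      obtain ⟨hcyc, h0⟩ := hA
      have hm1 : (-1 : ZMod g) ∉ A := by
        intro hm
        have := hcyc (-1) hm
        simp at this
        exact this h0
      have h1A : (1 : ZMod g) ∉ A := by
        have := hcyc 0 h0
        simpa using this
      constructor
      · intro x hx hx1
        rw [Finset.mem_erase] at hx hx1
        exact hcyc x hx.2 hx1.2
      · intro j hj
        rw [Finset.mem_erase]
        interval_cases j
        · push_cast
          rw [add_zero]
          intro h
          exact hm1 h.2
        · push_cast
          intro h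
          exact h.1 (by ring)
        · push_cast
          intro h
          have e2 : (-1 : ZMod g) + 2 = 1 := by ring
          rw [e2] at h
          exact h1A h.2

    · intro A hA B hB hAB
      simp only [coe_filter, mem_filter, Set.mem_setOf_eq] at hA hB
      have hAB' : A.erase 0 = B.erase 0 := hAB
      have h := congrArg (insert (0 : ZMod g)) hAB'
      rwa [Finset.insert_erase hA.2, Finset.insert_erase hB.2] at h
  have h2 : (((univ : Finset (Finset (ZMod g))).filter (fun A => ∀ x ∈ A, x + 1 ∉ A)).filter
      (fun a => (0 : ZMod g) ∉ a)).card ≤ Nat.fib (g + 1) := by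
    refine le_trans (Finset.card_le_card ?_) (cyc_avoid g (by omega) 0)
    intro A hA
    simp only [mem_filter, mem_univ, true_and] at hA ⊢
    exact ⟨hA.1, hA.2⟩
  omega

/-! ### Walk lemmas -/

section Walks
variable {V : Type*} {G : SimpleGraph V}

lemma tail_length_eq {u v : V} (p : G.Walk u v) : p.support.tail.length = p.length := by
  rw [List.length_tail, SimpleGraph.Walk.length_support]
  omega

lemma tail_getElem_eq_getVert {u v : V} (p : G.Walk u v) (i : ℕ) (h : i < p.length) :
    p.support.tail[i]'(by rw [tail_length_eq]; exact h) = p.getVert (i + 1) := by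
  induction p generalizing i with
  | nil => simp at h
  | cons hadj q ih =>
    simp only [SimpleGraph.Walk.support_cons, List.tail_cons,
      SimpleGraph.Walk.getVert_cons_succ]
    match i with
    | 0 =>
      have h0 : q.support[0]'(by simp [SimpleGraph.Walk.length_support]) = q.getVert 0 := by
        cases q <;> simp [SimpleGraph.Walk.support_cons, SimpleGraph.Walk.getVert_zero]
      exact h0
    | (i+1) =>
      simp only [SimpleGraph.Walk.length_cons] at h
      have := ih i (by omega)
      rw [← List.getElem_tail]
      exact ih i (by omega)

lemma cycle_getVert_injOn {a : V} {w : G.Walk a a} (hw : w.IsCycle) :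
    ∀ i < w.length, ∀ j < w.length, w.getVert i = w.getVert j → i = j := by
  have hnd : w.support.tail.Nodup := hw.2
  have hL : 3 ≤ w.length := hw.three_le_length
  have hlast : w.getVert w.length = w.getVert 0 := by
    rw [SimpleGraph.Walk.getVert_length, SimpleGraph.Walk.getVert_zero]
  intro i hi j hj hij
  by_contra hne
  wlog hlt : i < j generalizing i j
  · exact this j hj i hi hij.symm (Ne.symm hne) (by omega)
  rcases Nat.eq_zero_or_pos i with rfl | hipos
  · have h1 : w.support.tail[j-1]'(by rw [tail_length_eq]; omega)
        = w.support.tail[w.length-1]'(by rw [tail_length_eq]; omega) := by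
      rw [tail_getElem_eq_getVert w (j-1) (by omega),
        tail_getElem_eq_getVert w (w.length-1) (by omega),
        show j - 1 + 1 = j by omega, show w.length - 1 + 1 = w.length by omega,
        hlast, ← hij]
    have := (List.Nodup.getElem_inj_iff hnd).mp h1
    omega
  · have h1 : w.support.tail[i-1]'(by rw [tail_length_eq]; omega)
        = w.support.tail[j-1]'(by rw [tail_length_eq]; omega) := by
      rw [tail_getElem_eq_getVert w (i-1) (by omega),
        tail_getElem_eq_getVert w (j-1) (by omega),
        show i - 1 + 1 = i by omega, show j - 1 + 1 = j by omega, hij]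
    have := (List.Nodup.getElem_inj_iff hnd).mp h1
    omega

end Walks

/-! ### Graph counting -/

section Graph
variable {V : Type*} [Fintype V] {G : SimpleGraph V}

/-- some vertex outside W has a neighbour in W -/
lemma exists_adj_of_connected (hconn : G.Connected) (W : Finset V)
    (hne : W.Nonempty) (hW : W ≠ univ) :
    ∃ u w, u ∉ W ∧ w ∈ W ∧ G.Adj u w := by
  obtain ⟨v0, hv0⟩ := hne
  have : ∃ x, x ∉ W := by
    by_contra h
    push_neg at h
    exact hW (Finset.eq_univ_iff_forall.mpr h)
  obtain ⟨x, hx⟩ := this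
  obtain ⟨p⟩ := hconn x v0
  clear hW
  induction p with
  | nil => exact absurd hv0 hx
  | @cons a b c hab q ih =>
    by_cases hb : b ∈ W
    · exact ⟨a, b, hx, hb, hab⟩
    · exact ih hv0 hb

variable (G) in
noncomputable def idpCnt (W : Finset V) : ℕ :=
  (W.powerset.filter (fun S => ∀ u ∈ S, ∀ v ∈ S, ¬ G.Adj u v)).card

variable {g : ℕ} [NeZero g] (e : ZMod g → V)

lemma base_bound (hg : 4 ≤ g) (he_inj : Function.Injective e)
    (he_adj : ∀ i, G.Adj (e i) (e (i + 1))) :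
    idpCnt G (univ.image e) ≤ Nat.fib (g + 1) + Nat.fib (g - 1) := by
  refine le_trans (Finset.card_le_card_of_injOn
    (fun S => univ.filter (fun i => e i ∈ S)) ?_ ?_) (cyc_all g hg)
  · intro S hS
    simp only [mem_coe, mem_filter, mem_powerset, mem_univ, true_and] at hS ⊢
    intro i hi hi1
    exact hS.2 (e i) hi (e (i+1)) hi1 (he_adj i)
  · intro S1 h1 S2 h2 h12
    simp only [coe_filter, Set.mem_setOf_eq, mem_powerset] at h1 h2
    have key : ∀ S T : Finset V, S ⊆ univ.image e →
        univ.filter (fun i => e i ∈ S) = univ.filter (fun i => e i ∈ T) → S ⊆ T := by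
      intro S T hSe hfil x hx
      obtain ⟨i, _, rfl⟩ := Finset.mem_image.mp (hSe hx)
      have : i ∈ univ.filter (fun i => e i ∈ S) := by simp [hx]
      rw [hfil, mem_filter] at this
      exact this.2
    exact Finset.Subset.antisymm (key S1 S2 h1.1 h12) (key S2 S1 h2.1 h12.symm)

lemma step_bound (hg : 4 ≤ g) (he_inj : Function.Injective e)
    (he_adj : ∀ i, G.Adj (e i) (e (i + 1)))
    (W : Finset V) (hCW : univ.image e ⊆ W) (u w : V)
    (huW : u ∉ W) (hw : w ∈ W) (hadj : G.Adj u w) :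
    idpCnt G (insert u W) ≤ idpCnt G W
      + Nat.fib (g + 1) * 2 ^ ((W \ univ.image e).card) := by
  classical
  set C := (univ.image e : Finset V) with hC
  have idp : Finset V → Prop := fun S => ∀ u ∈ S, ∀ v ∈ S, ¬ G.Adj u v
  have hsplit := Finset.card_filter_add_card_filter_not
    (s := (insert u W).powerset.filter (fun S => ∀ u ∈ S, ∀ v ∈ S, ¬ G.Adj u v)) (p := fun S => u ∈ S)
  have hpart2 : (((insert u W).powerset.filter (fun S => ∀ u ∈ S, ∀ v ∈ S, ¬ G.Adj u v)).filter (fun S => ¬ u ∈ S)).card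
      ≤ idpCnt G W := by
    apply Finset.card_le_card
    intro S hS
    simp only [mem_filter, mem_powerset] at hS ⊢
    exact ⟨(Finset.subset_insert_iff_of_notMem hS.2).mp hS.1.1, hS.1.2⟩
  have hpart1 : (((insert u W).powerset.filter (fun S => ∀ u ∈ S, ∀ v ∈ S, ¬ G.Adj u v)).filter (fun S => u ∈ S)).card
      ≤ Nat.fib (g + 1) * 2 ^ ((W \ C).card) := by
    -- common facts
    have hAcyc : ∀ S : Finset V, (∀ u ∈ S, ∀ v ∈ S, ¬ G.Adj u v) →
        (∀ i ∈ univ.filter (fun i => e i ∈ S), i + 1 ∉ univ.filter (fun i => e i ∈ S)) := by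
      intro S hS i hi hi1
      rw [mem_filter] at hi hi1
      exact hS (e i) hi.2 (e (i+1)) hi1.2 (he_adj i)
    have hkey : ∀ S T : Finset V, S ⊆ insert u W → T ⊆ insert u W → u ∈ S → u ∈ T →
        univ.filter (fun i => e i ∈ S) = univ.filter (fun i => e i ∈ T) →
        S ∩ (W \ C) = T ∩ (W \ C) → S ⊆ T := by
      intro S T hSsub hTsub huS huT hfil hint x hx
      rcases Finset.mem_insert.mp (hSsub hx) with rfl | hxW
      · exact huT
      by_cases hxC : x ∈ C
      · obtain ⟨i, _, rfl⟩ := Finset.mem_image.mp hxC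
        have : i ∈ univ.filter (fun i => e i ∈ S) := by simp [hx]
        rw [hfil, mem_filter] at this
        exact this.2
      · have : x ∈ S ∩ (W \ C) := by
          rw [Finset.mem_inter, Finset.mem_sdiff]
          exact ⟨hx, hxW, hxC⟩
        rw [hint, Finset.mem_inter] at this
        exact this.1
    by_cases hwC : w ∈ C
    · -- w on the cycle
      obtain ⟨t, _, rfl⟩ := Finset.mem_image.mp hwC
      refine le_trans (Finset.card_le_card_of_injOn
        (t := (univ.filter (fun A : Finset (ZMod g) => (∀ x ∈ A, x + 1 ∉ A) ∧ t ∉ A))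
          ×ˢ (W \ C).powerset)
        (fun S => (univ.filter (fun i => e i ∈ S), S ∩ (W \ C))) ?_ ?_) ?_
      · intro S hS
        simp only [mem_coe, mem_filter, mem_powerset] at hS
        obtain ⟨⟨hSsub, hSidp⟩, huS⟩ := hS
        rw [Finset.mem_coe, Finset.mem_product]
        refine ⟨?_, Finset.mem_powerset.mpr Finset.inter_subset_right⟩
        simp only [mem_filter, mem_univ, true_and]
        exact ⟨fun i hi hi1 => hSidp _ hi _ hi1 (he_adj i),
          fun ht => hSidp u huS (e t) ht hadj⟩
      · intro S1 h1 S2 h2 h12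
        simp only [coe_filter, Set.mem_setOf_eq, mem_filter, mem_powerset] at h1 h2
        have hp := Prod.mk.injEq _ _ _ _ ▸ h12
        obtain ⟨ha, hb⟩ := Prod.mk.inj h12
        exact Finset.Subset.antisymm
          (hkey S1 S2 h1.1.1 h2.1.1 h1.2 h2.2 ha hb)
          (hkey S2 S1 h2.1.1 h1.1.1 h2.2 h1.2 ha.symm hb.symm)
      · rw [Finset.card_product, Finset.card_powerset]
        exact Nat.mul_le_mul_right _ (cyc_avoid g (by omega) t)
    · -- w off the cycle
      have hwWC : w ∈ W \ C := Finset.mem_sdiff.mpr ⟨hw, hwC⟩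
      have hdpos : 0 < (W \ C).card := Finset.card_pos.mpr ⟨w, hwWC⟩
      refine le_trans (Finset.card_le_card_of_injOn
        (t := (univ.filter (fun A : Finset (ZMod g) => ∀ x ∈ A, x + 1 ∉ A))
          ×ˢ ((W \ C).erase w).powerset)
        (fun S => (univ.filter (fun i => e i ∈ S), S ∩ ((W \ C).erase w))) ?_ ?_) ?_
      · intro S hS
        simp only [mem_coe, mem_filter, mem_powerset] at hS
        obtain ⟨⟨hSsub, hSidp⟩, huS⟩ := hS
        rw [Finset.mem_coe, Finset.mem_product]
        refine ⟨?_, Finset.mem_powerset.mpr Finset.inter_subset_right⟩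
        simp only [mem_filter, mem_univ, true_and]
        exact fun i hi hi1 => hSidp _ hi _ hi1 (he_adj i)
      · intro S1 h1 S2 h2 h12
        simp only [coe_filter, Set.mem_setOf_eq, mem_filter, mem_powerset] at h1 h2
        obtain ⟨ha, hb⟩ := Prod.mk.inj h12
        have hwS : ∀ S : Finset V, (∀ u ∈ S, ∀ v ∈ S, ¬ G.Adj u v) → u ∈ S → S ∩ (W \ C) = S ∩ ((W \ C).erase w) := by
          intro S hSidp huS
          ext x
          simp only [Finset.mem_inter, Finset.mem_erase]
          refine ⟨fun hx => ⟨hx.1, ⟨?_, hx.2⟩⟩, fun hx => ⟨hx.1, hx.2.2⟩⟩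
          rintro rfl
          exact hSidp u huS x hx.1 hadj
        have hb' : S1 ∩ (W \ C) = S2 ∩ (W \ C) := by
          rw [hwS S1 h1.1.2 h1.2, hwS S2 h2.1.2 h2.2, hb]
        exact Finset.Subset.antisymm
          (hkey S1 S2 h1.1.1 h2.1.1 h1.2 h2.2 ha hb')
          (hkey S2 S1 h2.1.1 h1.1.1 h2.2 h1.2 ha.symm hb'.symm)
      · rw [Finset.card_product, Finset.card_powerset, Finset.card_erase_of_mem hwWC]
        calc _ ≤ (Nat.fib (g+1) + Nat.fib (g-1)) * 2 ^ ((W \ C).card - 1) :=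
              Nat.mul_le_mul_right _ (cyc_all g hg)
          _ ≤ (2 * Nat.fib (g+1)) * 2 ^ ((W \ C).card - 1) := by
              apply Nat.mul_le_mul_right
              have : Nat.fib (g-1) ≤ Nat.fib (g+1) := Nat.fib_mono (by omega)
              omega
          _ = Nat.fib (g+1) * 2 ^ ((W \ C).card) := by
              obtain ⟨d1, hd1⟩ : ∃ d1, (W \ C).card = d1 + 1 :=
                ⟨(W \ C).card - 1, by omega⟩
              rw [hd1, Nat.add_sub_cancel, pow_succ]
              ring
    -- end cases
  unfold idpCnt at *
  omega



lemma descent (hg : 4 ≤ g) (hconn : G.Connected) (he_inj : Function.Injective e)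
    (he_adj : ∀ i, G.Adj (e i) (e (i + 1))) :
    ∀ (j : ℕ) (W : Finset V), univ.image e ⊆ W → Wᶜ.card = j →
    idpCnt G univ ≤ idpCnt G W
      + Nat.fib (g + 1) * (2 ^ ((univ \ univ.image e).card) - 2 ^ ((W \ univ.image e).card)) := by
  intro j
  induction j with
  | zero =>
    intro W hCW hWc
    have : W = univ := by
      rw [← Finset.compl_eq_empty_iff]
      exact Finset.card_eq_zero.mp hWc
    subst this
    exact Nat.le_add_right _ _
  | succ j ih =>
    intro W hCW hWc
    have hne : W.Nonempty := by
      refine Finset.Nonempty.mono hCW ?_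
      refine ⟨e 0, Finset.mem_image_of_mem e (mem_univ 0)⟩
    have hWne : W ≠ univ := by
      intro h
      rw [h] at hWc
      simp only [Finset.compl_univ, Finset.card_empty] at hWc
      omega
    obtain ⟨u, w, huW, hw, hadj⟩ := exists_adj_of_connected hconn W hne hWne
    have hCW' : univ.image e ⊆ insert u W := hCW.trans (Finset.subset_insert u W)
    have hWc' : (insert u W)ᶜ.card = j := by
      rw [Finset.compl_insert, Finset.card_erase_of_mem (Finset.mem_compl.mpr huW), hWc]
      omega
    have hstep := step_bound e hg he_inj he_adj W hCW u w huW hw hadj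
    have hih := ih (insert u W) hCW' hWc'
    have hins : (insert u W) \ univ.image e = insert u (W \ univ.image e) := by
      rw [Finset.insert_sdiff_of_notMem]
      intro hu
      exact huW (hCW hu)
    have huWC : u ∉ W \ univ.image e := fun h => huW (Finset.mem_sdiff.mp h).1
    have hcard : ((insert u W) \ univ.image e).card = (W \ univ.image e).card + 1 := by
      rw [hins, Finset.card_insert_of_notMem huWC]
    rw [hcard] at hih
    -- arithmetic
    have hsub : W \ univ.image e ⊆ univ \ univ.image e :=
      Finset.sdiff_subset_sdiff (Finset.subset_univ W) (Finset.Subset.refl _)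
    have hlt : (W \ univ.image e).card + 1 ≤ (univ \ univ.image e).card := by
      have hWcard : W.card < Fintype.card V := by
        have := Finset.card_lt_card (Finset.ssubset_univ_iff.mpr hWne)
        simpa using this
      have hCc : (univ.image e).card ≤ W.card := Finset.card_le_card hCW
      have h1 : (W \ univ.image e).card = W.card - (univ.image e).card :=
        Finset.card_sdiff_of_subset hCW
      have h2 : (univ \ univ.image e).card = Fintype.card V - (univ.image e).card := by
        rw [Finset.card_sdiff_of_subset (Finset.subset_univ _), Finset.card_univ]
      omega
    have hpow : 2 ^ ((W \ univ.image e).card + 1) ≤ 2 ^ ((univ \ univ.image e).card) :=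
      Nat.pow_le_pow_right (by norm_num) hlt
    set a := Nat.fib (g + 1)
    set b := 2 ^ ((W \ univ.image e).card) with hb
    set X := 2 ^ ((univ \ univ.image e).card) with hX
    have hb2 : 2 ^ ((W \ univ.image e).card + 1) = 2 * b := by rw [pow_succ]; ring
    rw [hb2] at hih hpow
    have e1 : a * (X - 2 * b) + a * (2 * b) = a * X := by
      rw [← Nat.mul_add]
      congr 1
      omega
    have e2 : a * (X - b) + a * b = a * X := by
      rw [← Nat.mul_add]
      congr 1
      omega
    have e3 : a * (2 * b) = 2 * (a * b) := by ring
    omega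

lemma descent_final (hg : 4 ≤ g) (hconn : G.Connected)
    (he_inj : Function.Injective e)
    (he_adj : ∀ i, G.Adj (e i) (e (i + 1))) :
    idpCnt G univ ≤ 2 ^ (Fintype.card V - g) * Nat.fib (g + 1) + Nat.fib (g - 1) := by
  have hCcard : (univ.image e).card = g := by
    rw [Finset.card_image_of_injective _ he_inj, Finset.card_univ, ZMod.card]
  have h := descent e hg hconn he_inj he_adj ((univ.image e)ᶜ.card) (univ.image e)
    (Finset.Subset.refl _) rfl
  have hbase := base_bound (G := G) e hg he_inj he_adj
  have hcard2 : (univ \ univ.image e).card = Fintype.card V - g := by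
    rw [Finset.card_sdiff_of_subset (Finset.subset_univ _), Finset.card_univ, hCcard]
  have hcard3 : (univ.image e \ univ.image e).card = 0 := by
    simp
  rw [hcard2, hcard3] at h
  have hng : g ≤ Fintype.card V := by
    calc g = (univ.image e).card := hCcard.symm
      _ ≤ (univ : Finset V).card := Finset.card_le_card (Finset.subset_univ _)
      _ = Fintype.card V := Finset.card_univ
  have hX1 : 1 ≤ 2 ^ (Fintype.card V - g) := Nat.one_le_two_pow
  set a := Nat.fib (g + 1)
  set X := 2 ^ (Fintype.card V - g) with hXdef
  simp only [pow_zero] at h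
  have e2 : a * (X - 1) + a = a * X := by
    have hX2 : X - 1 + 1 = X := by omega
    calc a * (X - 1) + a = a * ((X - 1) + 1) := by ring
      _ = a * X := by rw [hX2]
  have e3 : a * X = X * a := by ring
  omega


end Graph

theorem stmt8 {V : Type*} [Fintype V] (G : SimpleGraph V) (n g : ℕ)
    (hconn : G.Connected) (hbip : G.Colorable 2) (hn : Fintype.card V = n)
    (hgirth : G.girth = g) (hg : 4 ≤ g) :
    numIndepSets G ≤ 2 ^ (n - g) * Nat.fib (g + 1) + Nat.fib (g - 1) := by
  classical
  haveI : NeZero g := ⟨by omega⟩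
  -- extract a cycle of length g
  have hnac : ¬ G.IsAcyclic := by
    intro h
    rw [girth_eq_zero.mpr h] at hgirth
    omega
  obtain ⟨a, w, hcyc, hlen⟩ := SimpleGraph.exists_girth_eq_length.mpr hnac
  rw [hgirth] at hlen
  -- hlen : g = w.length
  set e : ZMod g → V := fun i => w.getVert i.val with he
  have he_inj : Function.Injective e := by
    intro i j hij
    have hvi : i.val < w.length := by rw [← hlen]; exact ZMod.val_lt i
    have hvj : j.val < w.length := by rw [← hlen]; exact ZMod.val_lt j
    have := cycle_getVert_injOn hcyc i.val hvi j.val hvj hij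
    exact ZMod.val_injective g this
  have he_adj : ∀ i, G.Adj (e i) (e (i + 1)) := by
    intro i
    have hvi : i.val < g := ZMod.val_lt i
    by_cases hlt : i.val + 1 < g
    · have hval : (i + 1).val = i.val + 1 := by
        have h1 : (i + 1 : ZMod g) = ((i.val + 1 : ℕ) : ZMod g) := by
          push_cast
          rw [ZMod.natCast_val, ZMod.cast_id]
        rw [h1, ZMod.val_cast_of_lt hlt]
      show G.Adj (w.getVert i.val) (w.getVert (i+1).val)
      rw [hval]
      exact w.adj_getVert_succ (by omega)
    · have hvi' : i.val = g - 1 := by omega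
      have hz : (i + 1 : ZMod g) = 0 := by
        have h1 : (i + 1 : ZMod g) = ((i.val + 1 : ℕ) : ZMod g) := by
          push_cast
          rw [ZMod.natCast_val, ZMod.cast_id]
        rw [h1, show i.val + 1 = g by omega, ZMod.natCast_self]
      show G.Adj (w.getVert i.val) (w.getVert (i+1).val)
      rw [hz, ZMod.val_zero, Walk.getVert_zero]
      have := w.adj_getVert_succ (i := w.length - 1)
        (by have := hcyc.three_le_length; omega)
      rw [show w.length - 1 + 1 = w.length by have := hcyc.three_le_length; omega,
        Walk.getVert_length] at this
      rw [hvi']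
      rw [← hlen] at this
      exact this
  -- bridge from Set-subtype count to Finset count
  have hbridge : numIndepSets G ≤ idpCnt G univ := by
    unfold numIndepSets idpCnt
    have : Nat.card {S : Finset V // S ∈ univ.powerset.filter
        (fun S => ∀ u ∈ S, ∀ v ∈ S, ¬ G.Adj u v)} = (univ.powerset.filter
        (fun S => ∀ u ∈ S, ∀ v ∈ S, ¬ G.Adj u v)).card := by
      rw [Nat.card_eq_fintype_card, Fintype.card_coe]
    rw [← this]
    apply Nat.card_le_card_of_injective
      (f := fun s => (⟨s.1.toFinset, ?_⟩ : {S : Finset V // S ∈ univ.powerset.filter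
        (fun S => ∀ u ∈ S, ∀ v ∈ S, ¬ G.Adj u v)}))
    · intro s1 s2 h12
      apply Subtype.ext
      have := congrArg (fun x => (x : {S : Finset V // _}).1) h12
      simp only [Subtype.mk.injEq] at h12
      have h3 := congrArg (fun F : Finset V => (F : Set V)) h12
      simpa [Set.coe_toFinset] using h3
    · rw [Finset.mem_filter]
      refine ⟨Finset.mem_powerset.mpr (Finset.subset_univ _), ?_⟩
      intro u hu v hv
      rw [Set.mem_toFinset] at hu hv
      exact s.2 u hu v hv
  have hfinal := descent_final e hg hconn he_inj he_adj
  rw [hn] at hfinal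
  exact le_trans hbridge hfinal
end

section
/- If G is a tree of order 2n that contains a perfect matching, then i(G) ≤ 2·3^{n-1} + 2^{n-1}. -/
open Finset

namespace S9

/-- valid assignments of states to pairs -/
def Valid (n : ℕ) (p : Fin n → Fin n) (c d : Fin n → Fin 3) (σ : Fin n → Fin 3) : Prop :=
  ∀ i, i.1 ≠ 0 → ¬(σ i = c i ∧ σ (p i) = d i)

instance (n p c d) : DecidablePred (Valid n p c d) := fun _ => by
  unfold Valid; infer_instance

def valids (n : ℕ) (p : Fin n → Fin n) (c d : Fin n → Fin 3) : Finset (Fin n → Fin 3) :=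
  univ.filter (Valid n p c d)

def validsAt (n : ℕ) (p : Fin n → Fin n) (c d : Fin n → Fin 3) (j : Fin n) (v : Fin 3) :
    Finset (Fin n → Fin 3) :=
  (valids n p c d).filter (fun σ => σ j = v)

section Step

variable {n : ℕ} (p : Fin (n + 2) → Fin (n + 2)) (c d : Fin (n + 2) → Fin 3)
  (hp : ∀ i : Fin (n+2), i.1 ≠ 0 → p i < i)

def rp : Fin (n + 1) → Fin (n + 1) := fun i =>
  if h : i.1 = 0 then 0 else ⟨(p i.castSucc).1, by
    have h1 : p i.castSucc < i.castSucc := hp i.castSucc (by simpa using h)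
    have := Fin.lt_iff_val_lt_val.mp h1
    simp only [Fin.coe_castSucc] at this
    omega⟩

def pl : Fin (n + 1) := ⟨(p (Fin.last (n + 1))).1, by
  have h1 : p (Fin.last (n+1)) < Fin.last (n+1) := hp _ (by simp)
  have := Fin.lt_iff_val_lt_val.mp h1
  simpa using this⟩

lemma rp_lt : ∀ i : Fin (n+1), i.1 ≠ 0 → rp p hp i < i := by
  intro i hi
  have h1 : p i.castSucc < i.castSucc := hp i.castSucc (by simpa using hi)
  have := Fin.lt_iff_val_lt_val.mp h1
  simp only [Fin.coe_castSucc] at this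
  rw [Fin.lt_iff_val_lt_val]
  simp [rp, hi]
  omega

lemma snoc_valid_iff (σ' : Fin (n + 1) → Fin 3) (x : Fin 3) :
    Valid (n+2) p c d (Fin.snoc σ' x) ↔
      Valid (n+1) (rp p hp) (c ∘ Fin.castSucc) (d ∘ Fin.castSucc) σ' ∧
        ¬(x = c (Fin.last (n+1)) ∧ σ' (pl p hp) = d (Fin.last (n+1))) := by
  have hcast : ∀ i : Fin (n+1), i.1 ≠ 0 → p i.castSucc = (rp p hp i).castSucc := by
    intro i hi
    simp [rp, hi, Fin.ext_iff]
  have hlastp : p (Fin.last (n+1)) = (pl p hp).castSucc := by simp [pl, Fin.ext_iff]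
  constructor
  · intro h
    constructor
    · intro i hi hc
      refine h i.castSucc (by simpa using hi) ?_
      rw [hcast i hi]
      simpa [Fin.snoc_castSucc] using hc
    · intro hc
      refine h (Fin.last (n+1)) (by simp) ?_
      rw [hlastp]
      simp only [Fin.snoc_last, Fin.snoc_castSucc]
      exact hc
  · rintro ⟨h1, h2⟩ i hi hc
    by_cases hil : i = Fin.last (n+1)
    · subst hil
      refine h2 ?_
      rw [hlastp] at hc
      simpa [Fin.snoc_last, Fin.snoc_castSucc] using hc
    · obtain ⟨i', rfl⟩ := Fin.exists_castSucc_eq.mpr hil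
      refine h1 i' (by simpa using hi) ?_
      rw [hcast i' (by simpa using hi)] at hc
      simpa [Fin.snoc_castSucc] using hc

end Step

end S9

namespace S9

open Finset

section Count

variable {n : ℕ} (p : Fin (n + 2) → Fin (n + 2)) (c d : Fin (n + 2) → Fin 3)
  (hp : ∀ i : Fin (n+2), i.1 ≠ 0 → p i < i)

lemma init_mem (σ : Fin (n+2) → Fin 3) (hσ : σ ∈ valids (n+2) p c d) :
    Fin.init σ ∈ valids (n+1) (rp p hp) (c ∘ Fin.castSucc) (d ∘ Fin.castSucc) := by
  simp only [valids, mem_filter, mem_univ, true_and] at hσ ⊢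
  have := (snoc_valid_iff p c d hp (Fin.init σ) (σ (Fin.last (n+1)))).mp
    (by rwa [Fin.snoc_init_self])
  exact this.1

lemma fiber_card (σ' : Fin (n+1) → Fin 3)
    (hσ' : σ' ∈ valids (n+1) (rp p hp) (c ∘ Fin.castSucc) (d ∘ Fin.castSucc)) :
    ((valids (n+2) p c d).filter (fun σ => Fin.init σ = σ')).card =
      if σ' (pl p hp) = d (Fin.last (n+1)) then 2 else 3 := by
  simp only [valids, mem_filter, mem_univ, true_and] at hσ'
  have hcard : ((valids (n+2) p c d).filter (fun σ => Fin.init σ = σ')).card =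
      ((univ : Finset (Fin 3)).filter
        (fun x => ¬(x = c (Fin.last (n+1)) ∧ σ' (pl p hp) = d (Fin.last (n+1))))).card := by
    refine Finset.card_bij' (fun σ _ => σ (Fin.last (n+1))) (fun x _ => Fin.snoc σ' x)
      ?hi ?hj ?left ?right
    case hi =>
      intro σ hσ
      simp only [valids, mem_filter, mem_univ, true_and] at hσ
      obtain ⟨hv, hinit⟩ := hσ
      subst hinit
      have := (snoc_valid_iff p c d hp (Fin.init σ) (σ (Fin.last (n+1)))).mp
        (by rwa [Fin.snoc_init_self])
      simpa using this.2
    case hj =>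
      intro x hx
      simp only [mem_filter, mem_univ, true_and] at hx
      simp only [valids, mem_filter, mem_univ, true_and]
      exact ⟨(snoc_valid_iff p c d hp σ' x).mpr ⟨hσ', hx⟩, by simp⟩
    case left =>
      intro σ hσ
      simp only [valids, mem_filter, mem_univ, true_and] at hσ
      have h2 := hσ.2
      subst h2
      simp [Fin.snoc_init_self]
    case right =>
      intro x hx
      simp [Fin.snoc_last]
  rw [hcard]
  by_cases h : σ' (pl p hp) = d (Fin.last (n+1))
  · simp only [h, and_true, if_pos h]
    rw [show ((univ : Finset (Fin 3)).filter (fun x => ¬ x = c (Fin.last (n+1)))) =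
      univ.erase (c (Fin.last (n+1))) by ext x; simp [Finset.mem_erase, and_comm]]
    simp
  · simp [h]

lemma card_valids_step :
    (valids (n+2) p c d).card =
      ∑ σ' ∈ valids (n+1) (rp p hp) (c ∘ Fin.castSucc) (d ∘ Fin.castSucc),
        if σ' (pl p hp) = d (Fin.last (n+1)) then 2 else 3 := by
  rw [Finset.card_eq_sum_card_fiberwise (f := Fin.init)
    (t := valids (n+1) (rp p hp) (c ∘ Fin.castSucc) (d ∘ Fin.castSucc)) (fun ⦃σ⦄ hσ => Finset.mem_coe.mpr (init_mem p c d hp σ (Finset.mem_coe.mp hσ)))]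
  exact Finset.sum_congr rfl (fun σ' hσ' => fiber_card p c d hp σ' hσ')

end Count

end S9
namespace S9

open Finset

section Count2

variable {n : ℕ} (p : Fin (n + 2) → Fin (n + 2)) (c d : Fin (n + 2) → Fin 3)
  (hp : ∀ i : Fin (n+2), i.1 ≠ 0 → p i < i)

lemma card_validsAt_last (v : Fin 3) :
    (validsAt (n+2) p c d (Fin.last (n+1)) v).card =
      ((valids (n+1) (rp p hp) (c ∘ Fin.castSucc) (d ∘ Fin.castSucc)).filter
        (fun σ' => ¬(v = c (Fin.last (n+1)) ∧ σ' (pl p hp) = d (Fin.last (n+1))))).card := by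
  refine Finset.card_bij' (fun σ _ => Fin.init σ) (fun σ' _ => Fin.snoc σ' v)
    ?hi ?hj ?left ?right
  case hi =>
    intro σ hσ
    simp only [validsAt, valids, mem_filter, mem_univ, true_and] at hσ
    obtain ⟨hv, hlast⟩ := hσ
    have := (snoc_valid_iff p c d hp (Fin.init σ) (σ (Fin.last (n+1)))).mp
      (by rwa [Fin.snoc_init_self])
    simp only [mem_filter]
    refine ⟨by simp only [valids, mem_filter, mem_univ, true_and]; exact this.1, ?_⟩
    rw [← hlast]
    exact this.2
  case hj =>
    intro σ' hσ'
    simp only [valids, mem_filter, mem_univ, true_and] at hσ'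
    simp only [validsAt, valids, mem_filter, mem_univ, true_and]
    exact ⟨(snoc_valid_iff p c d hp σ' v).mpr ⟨hσ'.1, hσ'.2⟩, by simp⟩
  case left =>
    intro σ hσ
    simp only [validsAt, valids, mem_filter, mem_univ, true_and] at hσ
    have : Fin.snoc (Fin.init σ) v = σ := by rw [← hσ.2]; exact Fin.snoc_init_self σ
    exact this
  case right =>
    intro σ' hσ'
    simp

lemma card_validsAt_castSucc (j' : Fin (n+1)) (v : Fin 3) :
    (validsAt (n+2) p c d j'.castSucc v).card =
      ∑ σ' ∈ validsAt (n+1) (rp p hp) (c ∘ Fin.castSucc) (d ∘ Fin.castSucc) j' v,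
        if σ' (pl p hp) = d (Fin.last (n+1)) then 2 else 3 := by
  rw [Finset.card_eq_sum_card_fiberwise (f := Fin.init)
    (t := validsAt (n+1) (rp p hp) (c ∘ Fin.castSucc) (d ∘ Fin.castSucc) j' v) ?_]
  · refine Finset.sum_congr rfl (fun σ' hσ' => ?_)
    simp only [validsAt, mem_filter] at hσ'
    rw [← fiber_card p c d hp σ' hσ'.1]
    congr 1
    ext σ
    simp only [validsAt, mem_filter, and_assoc]
    constructor
    · rintro ⟨h1, _, h3⟩; exact ⟨h1, h3⟩
    · rintro ⟨h1, h3⟩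
      refine ⟨h1, ?_, h3⟩
      have : Fin.init σ j' = v := by rw [h3]; exact hσ'.2
      simpa [Fin.init] using this
  · intro σ hσ
    simp only [validsAt, Finset.coe_filter, Set.mem_setOf_eq, Finset.mem_coe, mem_filter] at hσ ⊢
    exact ⟨init_mem p c d hp σ hσ.1, hσ.2⟩

end Count2

theorem lemB (n : ℕ) : ∀ (p : Fin (n+1) → Fin (n+1)) (c d : Fin (n+1) → Fin 3)
    (hp : ∀ i : Fin (n+1), i.1 ≠ 0 → p i < i) (j : Fin (n+1)) (v : Fin 3),
    2^n ≤ (validsAt (n+1) p c d j v).card := by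
  induction n with
  | zero =>
    intro p c d hp j v
    refine le_trans ?_ (Finset.card_pos.mpr ⟨fun _ => v, ?_⟩)
    · simp
    · simp only [validsAt, valids, mem_filter, mem_univ, true_and]
      refine ⟨fun i hi => absurd (Nat.lt_one_iff.mp i.isLt) hi, trivial⟩
  | succ n ih =>
    intro p c d hp j v
    by_cases hj : j = Fin.last (n+1)
    · subst hj
      rw [card_validsAt_last p c d hp v]
      have hex : ∀ dl : Fin 3, ∃ w1 w2 : Fin 3, w1 ≠ w2 ∧ w1 ≠ dl ∧ w2 ≠ dl := by decide
      obtain ⟨w1, w2, hww, hw1, hw2⟩ := hex (d (Fin.last (n+1)))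
      set vs := valids (n+1) (rp p hp) (c ∘ Fin.castSucc) (d ∘ Fin.castSucc) with hvs
      have hsub : validsAt (n+1) (rp p hp) (c ∘ Fin.castSucc) (d ∘ Fin.castSucc) (pl p hp) w1 ∪
          validsAt (n+1) (rp p hp) (c ∘ Fin.castSucc) (d ∘ Fin.castSucc) (pl p hp) w2 ⊆
          (valids (n+1) (rp p hp) (c ∘ Fin.castSucc) (d ∘ Fin.castSucc)).filter (fun σ' => ¬(v = c (Fin.last (n+1)) ∧ σ' (pl p hp) = d (Fin.last (n+1)))) := by
        intro σ' hσ'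
        simp only [validsAt, mem_union, mem_filter, ← hvs] at hσ' ⊢
        rcases hσ' with ⟨h1, h2⟩ | ⟨h1, h2⟩
        · exact ⟨h1, fun hc => hw1 (h2 ▸ hc.2)⟩
        · exact ⟨h1, fun hc => hw2 (h2 ▸ hc.2)⟩
      have hdisj : Disjoint
          (validsAt (n+1) (rp p hp) (c ∘ Fin.castSucc) (d ∘ Fin.castSucc) (pl p hp) w1)
          (validsAt (n+1) (rp p hp) (c ∘ Fin.castSucc) (d ∘ Fin.castSucc) (pl p hp) w2) := by
        refine Finset.disjoint_left.mpr ?_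
        intro σ' h1 h2
        simp only [validsAt, mem_filter] at h1 h2
        exact hww (h1.2 ▸ h2.2 ▸ rfl)
      calc (2:ℕ)^(n+1) = 2^n + 2^n := by ring
        _ ≤ _ + _ := Nat.add_le_add (ih _ _ _ (rp_lt p hp) (pl p hp) w1) (ih _ _ _ (rp_lt p hp) (pl p hp) w2)
        _ = _ := (Finset.card_union_of_disjoint hdisj).symm
        _ ≤ _ := Finset.card_le_card hsub
    · obtain ⟨j', rfl⟩ := Fin.exists_castSucc_eq.mpr hj
      rw [card_validsAt_castSucc p c d hp j' v]
      have h2 : (validsAt (n+1) (rp p hp) (c ∘ Fin.castSucc) (d ∘ Fin.castSucc) j' v).card • 2 ≤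
          ∑ σ' ∈ validsAt (n+1) (rp p hp) (c ∘ Fin.castSucc) (d ∘ Fin.castSucc) j' v,
            if σ' (pl p hp) = d (Fin.last (n+1)) then 2 else 3 :=
        Finset.card_nsmul_le_sum _ _ _ (fun σ' _ => by split <;> omega)
      have h3 := ih (rp p hp) (c ∘ Fin.castSucc) (d ∘ Fin.castSucc) (rp_lt p hp) j' v
      simp only [smul_eq_mul] at h2
      calc (2:ℕ)^(n+1) = 2^n * 2 := by ring
        _ ≤ _ := Nat.mul_le_mul_right 2 h3
        _ ≤ _ := h2

theorem lemA (n : ℕ) : ∀ (p : Fin (n+1) → Fin (n+1)) (c d : Fin (n+1) → Fin 3)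
    (hp : ∀ i : Fin (n+1), i.1 ≠ 0 → p i < i),
    (valids (n+1) p c d).card ≤ 2 * 3^n + 2^n := by
  induction n with
  | zero =>
    intro p c d hp
    have : valids 1 p c d = univ := by
      apply Finset.eq_univ_of_forall
      intro σ
      simp only [valids, mem_filter, mem_univ, true_and]
      intro i hi
      omega
    rw [this]
    simp [Finset.card_univ]
  | succ n ih =>
    intro p c d hp
    rw [card_valids_step p c d hp]
    have vsdef : True := trivial
    have key : (∑ σ' ∈ valids (n+1) (rp p hp) (c ∘ Fin.castSucc) (d ∘ Fin.castSucc), if σ' (pl p hp) = d (Fin.last (n+1)) then 2 else 3) +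
        ((valids (n+1) (rp p hp) (c ∘ Fin.castSucc) (d ∘ Fin.castSucc)).filter (fun σ' => σ' (pl p hp) = d (Fin.last (n+1)))).card = 3 * (valids (n+1) (rp p hp) (c ∘ Fin.castSucc) (d ∘ Fin.castSucc)).card := by
      rw [Finset.card_filter, ← Finset.sum_add_distrib,
        Finset.sum_congr rfl (fun x _ => by split <;> rfl), Finset.sum_const, smul_eq_mul,
        mul_comm]
    have hN : (valids (n+1) (rp p hp) (c ∘ Fin.castSucc) (d ∘ Fin.castSucc)).card ≤ 2 * 3^n + 2^n := ih _ _ _ (rp_lt p hp)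
    have hk : 2^n ≤ ((valids (n+1) (rp p hp) (c ∘ Fin.castSucc) (d ∘ Fin.castSucc)).filter (fun σ' => σ' (pl p hp) = d (Fin.last (n+1)))).card :=
      lemB n (rp p hp) (c ∘ Fin.castSucc) (d ∘ Fin.castSucc) (rp_lt p hp) (pl p hp)
        (d (Fin.last (n+1)))
    have h3 : (3:ℕ)^(n+1) = 3 * 3^n := by ring
    have h2 : (2:ℕ)^(n+1) = 2 * 2^n := by ring
    obtain ⟨S, hS⟩ : ∃ S, (∑ σ' ∈ valids (n+1) (rp p hp) (c ∘ Fin.castSucc) (d ∘ Fin.castSucc), if σ' (pl p hp) = d (Fin.last (n+1)) then 2 else 3) = S := ⟨_, rfl⟩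
    obtain ⟨a, ha⟩ : ∃ a, ((valids (n+1) (rp p hp) (c ∘ Fin.castSucc) (d ∘ Fin.castSucc)).filter (fun σ' => σ' (pl p hp) = d (Fin.last (n+1)))).card = a := ⟨_, rfl⟩
    obtain ⟨N, hn2⟩ : ∃ N, (valids (n+1) (rp p hp) (c ∘ Fin.castSucc) (d ∘ Fin.castSucc)).card = N := ⟨_, rfl⟩
    rw [hS, ha, hn2] at key
    rw [hn2] at hN
    rw [ha] at hk
    rw [hS]
    obtain ⟨t1, ht1⟩ : ∃ t, (3:ℕ)^n = t := ⟨_, rfl⟩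
    obtain ⟨t2, ht2⟩ : ∃ t, (3:ℕ)^(n+1) = t := ⟨_, rfl⟩
    obtain ⟨t3, ht3⟩ : ∃ t, (2:ℕ)^n = t := ⟨_, rfl⟩
    obtain ⟨t4, ht4⟩ : ∃ t, (2:ℕ)^(n+1) = t := ⟨_, rfl⟩
    rw [ht1] at hN h3
    rw [ht3] at hN hk h2
    rw [ht2] at h3 ⊢
    rw [ht4] at h2 ⊢
    clear hS ha hn2 ht1 ht2 ht3 ht4 ih vsdef
    omega

end S9
namespace S9

theorem lemA' (N : ℕ) (hN : N ≠ 0) (p : Fin N → Fin N) (c d : Fin N → Fin 3)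
    (hp : ∀ i : Fin N, i.1 ≠ 0 → p i < i) :
    (valids N p c d).card ≤ 2 * 3^(N-1) + 2^(N-1) := by
  obtain ⟨m, rfl⟩ := Nat.exists_eq_succ_of_ne_zero hN
  simpa using lemA m p c d hp

end S9


open SimpleGraph

theorem stmt9 {V : Type*} [Fintype V] (G : SimpleGraph V) (hT : G.IsTree) (n : ℕ)
    (hn : Fintype.card V = 2 * n)
    (hpm : ∃ M : G.Subgraph, M.IsPerfectMatching) :
    numIndepSets G ≤ 2 * 3 ^ (n - 1) + 2 ^ (n - 1) := by
  classical
  obtain ⟨M, hM⟩ := hpm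
  have hconn : G.Connected := hT.1
  have hm' : ∀ v : V, ∃! w, M.Adj v w := fun v => hM.1 (hM.2 v)
  set m : V → V := fun v => (hm' v).choose with hmdef
  have hmadj : ∀ v, M.Adj v (m v) := fun v => (hm' v).choose_spec.1
  have hGadj : ∀ v, G.Adj v (m v) := fun v => M.adj_sub (hmadj v)
  have hmm : ∀ v, m (m v) = v := fun v => ((hm' (m v)).choose_spec.2 v (hmadj v).symm).symm
  have hne : ∀ v, m v ≠ v := fun v h => G.irrefl (h ▸ hGadj v)
  obtain ⟨r⟩ : Nonempty V := hconn.nonempty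
  set rk : V → ℕ := fun v => min (G.dist r v) (G.dist r (m v)) with hrkdef
  have hrk_m : ∀ v, rk (m v) = rk v := by
    intro v; simp only [hrkdef, hmm v]; exact Nat.min_comm _ _
  set e := Fintype.equivFin V with hedef
  set R : Finset V := Finset.univ.filter (fun v => (e v : ℕ) < e (m v)) with hRdef
  have hmemR : ∀ v, v ∈ R ↔ (e v : ℕ) < e (m v) := by
    intro v; simp [hRdef]
  have hRor : ∀ v, v ∈ R ∨ m v ∈ R := by
    intro v
    rcases Nat.lt_or_ge (e v : ℕ) (e (m v) : ℕ) with h | h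
    · exact Or.inl ((hmemR v).mpr h)
    · refine Or.inr ((hmemR (m v)).mpr ?_)
      rw [hmm v]
      rcases Nat.lt_or_ge (e (m v) : ℕ) (e v : ℕ) with h2 | h2
      · exact h2
      · exfalso
        have h3 : e (m v) = e v := Fin.ext (by omega)
        exact hne v (e.injective h3)
  have hRnot : ∀ v ∈ R, m v ∉ R := by
    intro v hv hmv
    rw [hmemR] at hv hmv
    rw [hmm v] at hmv
    omega
  -- the representative of a vertex
  set rep : V → V := fun v => if v ∈ R then v else m v with hrepdef
  have hrepR : ∀ v, rep v ∈ R := by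
    intro v
    simp only [hrepdef]
    split
    · assumption
    · rcases hRor v with h | h
      · tauto
      · exact h
  have hrep_or : ∀ v, rep v = v ∨ rep v = m v := by
    intro v; simp only [hrepdef]; split <;> simp
  have hrep_rk : ∀ v, rk (rep v) = rk v := by
    intro v
    rcases hrep_or v with h | h <;> rw [h]
    exact hrk_m v
  -- sorted list of representatives
  set l : List V := R.toList.mergeSort (fun a b => decide (rk a ≤ rk b)) with hldef
  have hperm : l.Perm R.toList := List.mergeSort_perm _ _
  have hnodup : l.Nodup := hperm.nodup_iff.mpr (Finset.nodup_toList R)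
  have hmem_l : ∀ v, v ∈ l ↔ v ∈ R := fun v => hperm.mem_iff.trans (Finset.mem_toList)
  have hsorted : l.Pairwise (fun a b => rk a ≤ rk b) := by
    have := List.pairwise_mergeSort (le := fun a b => decide (rk a ≤ rk b))
      (fun a b c hab hbc => by
        simp only [decide_eq_true_eq] at *; omega)
      (fun a b => by simp only [decide_eq_true_eq, Bool.or_eq_true]; omega)
      R.toList
    exact this.imp (fun h => of_decide_eq_true h)
  set N := l.length with hNdef
  set p : Fin N → V := fun i => l.get i with hpdef
  have hp_inj : Function.Injective p := by
    intro i j hij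
    exact List.nodup_iff_injective_get.mp hnodup hij
  have hmono : ∀ i j : Fin N, i ≤ j → rk (p i) ≤ rk (p j) := by
    intro i j hij
    rcases eq_or_lt_of_le hij with h | h
    · rw [h]
    · exact List.pairwise_iff_get.mp hsorted i j h
  -- index of an element of R
  have hidx : ∀ v ∈ R, ∃ i : Fin N, p i = v := by
    intro v hv
    have hvl : v ∈ l := (hmem_l v).mpr hv
    obtain ⟨i, hi⟩ := List.get_of_mem hvl
    exact ⟨i, hi⟩
  -- N = n
  have hcardR : R.card = n := by
    have hb : R.card = (Finset.univ.filter (fun v => ¬ ((e v : ℕ) < e (m v)))).card := by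
      refine Finset.card_bij (fun v _ => m v) ?_ ?_ ?_
      · intro v hv
        simp only [Finset.mem_filter, Finset.mem_univ, true_and] at *
        rw [hmm v]
        rw [hmemR] at hv
        omega
      · intro a _ b _ hab
        have := congrArg m hab
        rwa [hmm, hmm] at this
      · intro w hw
        simp only [Finset.mem_filter, Finset.mem_univ, true_and] at hw
        refine ⟨m w, ?_, hmm w⟩
        rw [hmemR, hmm w]
        rcases Nat.lt_or_ge (e (m w) : ℕ) (e w : ℕ) with h2 | h2
        · exact h2
        · exfalso
          have h3 : e (m w) = e w := Fin.ext (by omega)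
          exact hne w (e.injective h3)
    have hsum : R.card + (Finset.univ.filter (fun v => ¬ ((e v : ℕ) < e (m v)))).card
        = Fintype.card V := by
      rw [hRdef]
      exact Finset.card_filter_add_card_filter_not _
    omega
  have hNn : N = n := by
    rw [hNdef, hperm.length_eq, Finset.length_toList, hcardR]
  -- rank facts
  have hrk_r : rk (rep r) = 0 := by
    rw [hrep_rk]
    simp only [hrkdef]
    have : G.dist r r = 0 := by simp
    omega
  have hNpos : 0 < N := by
    obtain ⟨i, _⟩ := hidx (rep r) (hrepR r)
    exact Nat.pos_of_ne_zero (fun h => (h ▸ i).elim0)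
  have hrk0 : ∀ i : Fin N, rk (p i) = 0 → i.1 = 0 := by
    intro i hi
    -- p i's pair contains r, as does p ⟨0⟩'s
    obtain ⟨i0, hi0⟩ := hidx (rep r) (hrepR r)
    have h0 : rk (p ⟨0, hNpos⟩) = 0 := by
      have := hmono ⟨0, hNpos⟩ i0 (by simp [Fin.le_def])
      rw [hi0, hrk_r] at this
      omega
    have hcontain : ∀ j : Fin N, rk (p j) = 0 → p j = rep r := by
      intro j hj
      simp only [hrkdef] at hj
      have : G.dist r (p j) = 0 ∨ G.dist r (m (p j)) = 0 := by omega
      have hpj : p j = r ∨ p j = m r := by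
        rcases this with h | h
        · exact Or.inl (hconn.dist_eq_zero_iff.mp h).symm
        · right
          have : r = m (p j) := hconn.dist_eq_zero_iff.mp h
          rw [this, hmm]
      have hpjR : p j ∈ R := (hmem_l (p j)).mp (List.get_mem l j)
      rcases hrep_or r with hr1 | hr1 <;> rcases hpj with h | h
      · rw [hr1, h]
      · exfalso
        have : rep r = r := hr1
        have hrR : r ∈ R := this ▸ hrepR r
        have := hRnot r hrR
        rw [← h] at this
        exact this hpjR
      · exfalso
        have hmrR : m r ∈ R := hr1 ▸ hrepR r
        have := hRnot (m r) hmrR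
        rw [hmm] at this
        rw [← h] at this
        exact this hpjR
      · rw [hr1, h]
    have e1 := hcontain i hi
    have e2 := hcontain ⟨0, hNpos⟩ h0
    have : i = ⟨0, hNpos⟩ := hp_inj (e1.trans e2.symm)
    rw [this]
  -- closer neighbor
  have hstep : ∀ x : V, G.dist r x ≠ 0 → ∃ y, G.Adj y x ∧ G.dist r y < G.dist r x := by
    intro x hx
    obtain ⟨w, hw⟩ := hconn.exists_walk_length_eq_dist r x
    have hwr : w.reverse.length = G.dist r x := by
      rw [SimpleGraph.Walk.length_reverse]; exact hw
    cases hrev : w.reverse with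
    | nil =>
      exfalso
      rw [hrev] at hwr
      simp at hwr
      exact hx (by simp)
    | cons hadj q =>
      rename_i b
      refine ⟨b, hadj.symm, ?_⟩
      have : G.dist r b ≤ q.reverse.length := SimpleGraph.dist_le q.reverse
      rw [SimpleGraph.Walk.length_reverse] at this
      rw [hrev] at hwr
      simp only [SimpleGraph.Walk.length_cons] at hwr
      omega
  -- key existence
  have hkey : ∀ i : Fin N, i.1 ≠ 0 → ∃ (j : Fin N) (x y : V), j.1 < i.1 ∧ G.Adj x y ∧
      (x = p i ∨ x = m (p i)) ∧ (y = p j ∨ y = m (p j)) := by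
    intro i hi
    have hrki : rk (p i) ≠ 0 := fun h => hi (hrk0 i h)
    -- choose x
    obtain ⟨x, hx1, hx2⟩ : ∃ x, (x = p i ∨ x = m (p i)) ∧ G.dist r x = rk (p i) := by
      simp only [hrkdef]
      rcases Nat.le_or_le (G.dist r (p i)) (G.dist r (m (p i))) with h | h
      · exact ⟨p i, Or.inl rfl, by omega⟩
      · exact ⟨m (p i), Or.inr rfl, by omega⟩
    obtain ⟨y, hy1, hy2⟩ := hstep x (by omega)
    have hyrk : rk (rep y) < rk (p i) := by
      rw [hrep_rk]
      have : rk y ≤ G.dist r y := by simp only [hrkdef]; omega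
      omega
    obtain ⟨j, hj⟩ := hidx (rep y) (hrepR y)
    have hji : j.1 < i.1 := by
      by_contra hc
      have := hmono i j (by omega)
      rw [hj] at this
      omega
    refine ⟨j, x, y, hji, hy1.symm, hx1, ?_⟩
    rcases hrep_or y with h | h
    · left; rw [hj, h]
    · right
      rw [hj, h, hmm]
  choose jf xf yf hjlt hadjf hxef hyef using hkey
  set pii : Fin N → Fin N := fun i => if h : i.1 ≠ 0 then jf i h else i with hpiidef
  set cc : Fin N → Fin 3 := fun i => if h : i.1 ≠ 0 then (if xf i h = p i then 1 else 2) else 0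
    with hccdef
  set dd : Fin N → Fin 3 := fun i =>
    if h : i.1 ≠ 0 then (if yf i h = p (jf i h) then 1 else 2) else 0 with hdddef
  have hpii : ∀ i : Fin N, i.1 ≠ 0 → pii i < i := by
    intro i hi
    simp only [hpiidef, dif_pos hi]
    exact Fin.lt_def.mpr (hjlt i hi)
  -- the encoding map
  set Φ : Set V → (Fin N → Fin 3) := fun s i =>
    if p i ∈ s then 1 else if m (p i) ∈ s then 2 else 0 with hΦdef
  have hΦval : ∀ (s : Set V) i, (p i ∈ s ∧ Φ s i = 1) ∨ (p i ∉ s ∧ m (p i) ∈ s ∧ Φ s i = 2) ∨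
      (p i ∉ s ∧ m (p i) ∉ s ∧ Φ s i = 0) := by
    intro s i
    by_cases h1 : p i ∈ s
    · left; exact ⟨h1, by simp only [hΦdef, if_pos h1]⟩
    · by_cases h2 : m (p i) ∈ s
      · right; left; exact ⟨h1, h2, by simp only [hΦdef, if_neg h1, if_pos h2]⟩
      · right; right; exact ⟨h1, h2, by simp only [hΦdef, if_neg h1, if_neg h2]⟩
  have hΦ1 : ∀ (s : Set V) i, Φ s i = 1 ↔ p i ∈ s := by
    intro s i
    rcases hΦval s i with ⟨h1, h2⟩ | ⟨h1, hm2, h2⟩ | ⟨h1, hm2, h2⟩ <;> rw [h2]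
    · exact iff_of_true rfl h1
    · exact iff_of_false (by decide) h1
    · exact iff_of_false (by decide) h1
  have hΦ2 : ∀ (s : Set V) i, Φ s i = 2 ↔ (p i ∉ s ∧ m (p i) ∈ s) := by
    intro s i
    rcases hΦval s i with ⟨h1, h2⟩ | ⟨h1, hm2, h2⟩ | ⟨h1, hm2, h2⟩ <;> rw [h2]
    · exact iff_of_false (by decide) (fun hc => hc.1 h1)
    · exact iff_of_true rfl ⟨h1, hm2⟩
    · exact iff_of_false (by decide) (fun hc => hm2 hc.2)
  have hvalid : ∀ s : Set V, (∀ u ∈ s, ∀ v ∈ s, ¬ G.Adj u v) → S9.Valid N pii cc dd (Φ s) := by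
    intro s hs i hi hc
    obtain ⟨h1, h2⟩ := hc
    have hx : xf i hi ∈ s := by
      rw [hccdef] at h1
      simp only [dif_pos hi] at h1
      by_cases hxp : xf i hi = p i
      · rw [if_pos hxp] at h1
        rw [hxp]
        exact (hΦ1 s i).mp h1
      · rw [if_neg hxp] at h1
        have := (hΦ2 s i).mp h1
        rcases hxef i hi with h | h
        · exact absurd h hxp
        · rw [h]; exact this.2
    have hy : yf i hi ∈ s := by
      rw [hpiidef] at h2
      simp only [dif_pos hi] at h2
      rw [hdddef] at h2
      simp only [dif_pos hi] at h2
      by_cases hyp : yf i hi = p (jf i hi)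
      · rw [if_pos hyp] at h2
        rw [hyp]
        exact (hΦ1 s (jf i hi)).mp h2
      · rw [if_neg hyp] at h2
        have := (hΦ2 s (jf i hi)).mp h2
        rcases hyef i hi with h | h
        · exact absurd h hyp
        · rw [h]; exact this.2
    exact hs _ hx _ hy (hadjf i hi)
  -- injectivity
  have hmem_iff : ∀ (s : Set V), (∀ u ∈ s, ∀ v ∈ s, ¬ G.Adj u v) → ∀ v : V,
      (v ∈ s ↔ (∃ i : Fin N, (v = p i ∧ Φ s i = 1) ∨ (v = m (p i) ∧ Φ s i = 2))) := by
    intro s hs v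
    obtain ⟨i, hi⟩ := hidx (rep v) (hrepR v)
    constructor
    · intro hv
      rcases hrep_or v with h | h
      · refine ⟨i, Or.inl ⟨by rw [hi, h], ?_⟩⟩
        rw [hΦ1, hi, h]
        exact hv
      · refine ⟨i, Or.inr ⟨by rw [hi, h, hmm], ?_⟩⟩
        rw [hΦ2]
        constructor
        · intro hpis
          refine hs _ hpis _ ?_ (hGadj (p i))
          rw [hi, h, hmm]
          exact hv
        · rw [hi, h, hmm]
          exact hv
    · rintro ⟨j, hj | hj⟩
      · rw [hj.1]
        exact (hΦ1 s j).mp hj.2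
      · rw [hj.1]
        exact ((hΦ2 s j).mp hj.2).2
  -- conclude
  have hinj : Function.Injective
      (fun s : {s : Set V // ∀ u ∈ s, ∀ v ∈ s, ¬ G.Adj u v} =>
        (⟨Φ s.1, hvalid s.1 s.2⟩ : {σ : Fin N → Fin 3 // S9.Valid N pii cc dd σ})) := by
    intro s1 s2 h
    simp only [Subtype.mk.injEq] at h
    apply Subtype.ext
    ext v
    rw [hmem_iff s1.1 s1.2 v, hmem_iff s2.1 s2.2 v, h]
  have hle := Nat.card_le_card_of_injective _ hinj
  have hcard2 : Nat.card {σ : Fin N → Fin 3 // S9.Valid N pii cc dd σ} =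
      (S9.valids N pii cc dd).card := by
    rw [Nat.card_eq_fintype_card, Fintype.card_subtype]
    rfl
  have hfin := S9.lemA' N (by omega) pii cc dd hpii
  unfold numIndepSets
  calc Nat.card {s : Set V // ∀ u ∈ s, ∀ v ∈ s, ¬ G.Adj u v}
      ≤ Nat.card {σ : Fin N → Fin 3 // S9.Valid N pii cc dd σ} := hle
    _ = (S9.valids N pii cc dd).card := hcard2
    _ ≤ 2 * 3^(N-1) + 2^(N-1) := hfin
    _ = 2 * 3^(n-1) + 2^(n-1) := by rw [hNn]
end

section
/- The number of 11-avoiding words of length n over the alphabet {0, 1, …, 2^k} (words in which no two consecutive letters are both equal to 1) equals Σ_{j=0}^{⌈n/2⌉} C(n+1−j, j) · 2^{(n−j)k}. -/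
private def P (m n : ℕ) (f : Fin n → Fin (m + 1)) : Prop :=
  ∀ i : Fin n, ∀ h : i.val + 1 < n, ¬(f i = 1 ∧ f ⟨i.val + 1, h⟩ = 1)

private noncomputable def A (m n : ℕ) : ℕ := Nat.card {f : Fin n → Fin (m + 1) // P m n f}

private def G (q n : ℕ) : ℕ := ∑ j ∈ Finset.range (n + 1), (n + 1 - j).choose j * q ^ (n - j)

private lemma G_zero (q : ℕ) : G q 0 = 1 := by simp [G]

private lemma G_one (q : ℕ) : G q 1 = q + 1 := by
  simp [G, Finset.sum_range_succ]

private lemma G_rec (q n : ℕ) : G q (n + 2) = q * G q (n + 1) + q * G q n := by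
  have hA : ∑ j ∈ Finset.range (n + 1), (n + 1 - j).choose j * q ^ (n + 1 - j)
      = q * G q n := by
    rw [G, Finset.mul_sum]
    refine Finset.sum_congr rfl fun j hj => ?_
    have hj' : j ≤ n := by simpa using Nat.lt_succ_iff.mp (Finset.mem_range.mp hj)
    have h1 : n + 1 - j = (n - j) + 1 := by omega
    rw [h1, pow_succ]; ring
  have hB : q * G q (n + 1) = (∑ j ∈ Finset.range (n + 1), (n + 1 - j).choose (j + 1) * q ^ (n + 1 - j)) + q ^ (n + 2) := by
    rw [G, Finset.sum_range_succ' (fun j => (n + 2 - j).choose j * q ^ (n + 1 - j)) (n + 1)]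
    rw [mul_add, Finset.mul_sum]
    congr 1
    · refine Finset.sum_congr rfl fun j hj => ?_
      have hj' : j ≤ n := by simpa using Nat.lt_succ_iff.mp (Finset.mem_range.mp hj)
      have h1 : n + 2 - (j + 1) = (n + 1 - j) := by omega
      have h2 : n + 1 - (j + 1) = n - j := by omega
      have h3 : n + 1 - j = (n - j) + 1 := by omega
      rw [h1, h2, h3, pow_succ]; ring
    · simp [pow_succ]; ring
  rw [G, Finset.sum_range_succ' (fun j => (n + 3 - j).choose j * q ^ (n + 2 - j)) (n + 2)]
  have step : ∀ j ∈ Finset.range (n + 2), (n + 3 - (j+1)).choose (j+1) * q ^ (n + 2 - (j+1))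
      = (n + 1 - j).choose j * q ^ (n + 1 - j) + (n + 1 - j).choose (j + 1) * q ^ (n + 1 - j) := by
    intro j hj
    have hj' : j ≤ n + 1 := by simpa using Nat.lt_succ_iff.mp (Finset.mem_range.mp hj)
    have h1 : n + 3 - (j + 1) = (n + 1 - j) + 1 := by omega
    have h2 : n + 2 - (j + 1) = n + 1 - j := by omega
    rw [h1, h2, Nat.choose_succ_succ, add_mul]
  rw [Finset.sum_congr rfl step, Finset.sum_add_distrib]
  have hA' : ∑ j ∈ Finset.range (n + 2), (n + 1 - j).choose j * q ^ (n + 1 - j)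
      = ∑ j ∈ Finset.range (n + 1), (n + 1 - j).choose j * q ^ (n + 1 - j) := by
    rw [Finset.sum_range_succ]
    simp [Nat.choose_eq_zero_of_lt]
  have hB' : ∑ j ∈ Finset.range (n + 2), (n + 1 - j).choose (j + 1) * q ^ (n + 1 - j)
      = ∑ j ∈ Finset.range (n + 1), (n + 1 - j).choose (j + 1) * q ^ (n + 1 - j) := by
    rw [Finset.sum_range_succ]
    simp [Nat.choose_eq_zero_of_lt]
  rw [hA', hB', hA, hB]
  simp
  ring

private lemma A_zero (m : ℕ) : A m 0 = 1 := by
  have : ∀ f : Fin 0 → Fin (m + 1), P m 0 f := fun f i => i.elim0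
  rw [A, Nat.card_congr (Equiv.subtypeUnivEquiv this)]
  simp [Nat.card_eq_fintype_card]

private lemma A_one (m : ℕ) : A m 1 = m + 1 := by
  have : ∀ f : Fin 1 → Fin (m + 1), P m 1 f := by
    intro f i h; omega
  rw [A, Nat.card_congr (Equiv.subtypeUnivEquiv this)]
  simp [Nat.card_eq_fintype_card]

private lemma P_cons (m n : ℕ) (x : Fin (m + 1)) (f : Fin n → Fin (m + 1)) :
    P m (n + 1) (Fin.cons x f) ↔
      ((∀ h : 0 < n, ¬(x = 1 ∧ f ⟨0, h⟩ = 1)) ∧ P m n f) := by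
  constructor
  · intro H
    constructor
    · intro hn ⟨hx, h0⟩
      have h1 : (0 : Fin (n + 1)).val + 1 < n + 1 := by simpa using hn
      apply H 0 h1
      refine ⟨by simpa using hx, ?_⟩
      have : (⟨(0 : Fin (n + 1)).val + 1, h1⟩ : Fin (n + 1)) = Fin.succ ⟨0, hn⟩ := rfl
      rw [this, Fin.cons_succ]
      exact h0
    · intro i h hif
      have h' : (Fin.succ i).val + 1 < n + 1 := by simpa using h
      apply H i.succ h'
      have e1 : (⟨(Fin.succ i).val + 1, h'⟩ : Fin (n + 1)) = Fin.succ ⟨i.val + 1, h⟩ := rfl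
      rw [Fin.cons_succ, e1, Fin.cons_succ]
      exact hif
  · intro ⟨h1, h2⟩ i h
    cases i using Fin.cases with
    | zero =>
      have hn : 0 < n := by simpa using h
      have : (⟨(0 : Fin (n + 1)).val + 1, h⟩ : Fin (n + 1)) = Fin.succ ⟨0, hn⟩ := rfl
      rw [this, Fin.cons_zero, Fin.cons_succ]
      exact h1 hn
    | succ j =>
      have hj : j.val + 1 < n := by simpa using h
      have e1 : (⟨(Fin.succ j).val + 1, h⟩ : Fin (n + 1)) = Fin.succ ⟨j.val + 1, hj⟩ := rfl
      rw [Fin.cons_succ, e1, Fin.cons_succ]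
      exact h2 j hj

private lemma P_iff (m n : ℕ) (f : Fin (n + 1) → Fin (m + 1)) :
    P m (n + 1) f ↔
      ((∀ h : 0 < n, ¬(f 0 = 1 ∧ Fin.tail f ⟨0, h⟩ = 1)) ∧ P m n (Fin.tail f)) := by
  conv_lhs => rw [← Fin.cons_self_tail f]
  exact P_cons m n (f 0) (Fin.tail f)

private lemma A_rec (m n : ℕ) : A m (n + 2) = m * A m (n + 1) + m * A m n := by
  classical
  have e1 : {f : Fin (n + 2) → Fin (m + 1) // P m (n + 2) f} ≃
      {p : Fin (m + 1) × (Fin (n + 1) → Fin (m + 1)) //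
        ¬(p.1 = 1 ∧ p.2 0 = 1) ∧ P m (n + 1) p.2} :=
    (Fin.consEquiv (fun _ : Fin (n + 2) => Fin (m + 1))).symm.subtypeEquiv (fun f => by
      rw [P_iff m (n + 1) f]
      constructor
      · rintro ⟨ha, hb⟩
        exact ⟨fun hh => ha (by omega) ⟨hh.1, hh.2⟩, hb⟩
      · rintro ⟨ha, hb⟩
        exact ⟨fun _ hh => ha ⟨hh.1, hh.2⟩, hb⟩)
  set Q : Fin (m + 1) × (Fin (n + 1) → Fin (m + 1)) → Prop :=
    fun p => ¬(p.1 = 1 ∧ p.2 0 = 1) ∧ P m (n + 1) p.2 with hQ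
  have e2 : {p // Q p} ≃
      {p : {p // Q p} // p.val.1 = 1} ⊕ {p : {p // Q p} // ¬ p.val.1 = 1} :=
    (Equiv.sumCompl _).symm
  have e3 : {p : {p // Q p} // p.val.1 = 1} ≃
      {g : Fin (n + 1) → Fin (m + 1) // g 0 ≠ 1 ∧ P m (n + 1) g} :=
    { toFun := fun p => ⟨p.val.val.2,
        fun h => p.val.property.1 ⟨p.property, h⟩, p.val.property.2⟩
      invFun := fun g => ⟨⟨(1, g.val), fun h => g.property.1 h.2, g.property.2⟩, rfl⟩
      left_inv := by
        rintro ⟨⟨⟨x, g⟩, hq⟩, hx⟩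
        simp only at hx
        subst hx
        rfl
      right_inv := fun g => rfl }
  have e4 : {g : Fin (n + 1) → Fin (m + 1) // g 0 ≠ 1 ∧ P m (n + 1) g} ≃
      {p : Fin (m + 1) × (Fin n → Fin (m + 1)) // p.1 ≠ 1 ∧ P m n p.2} :=
    (Fin.consEquiv (fun _ : Fin (n + 1) => Fin (m + 1))).symm.subtypeEquiv (fun g => by
      rw [P_iff m n g]
      constructor
      · rintro ⟨ha, _, hb⟩
        exact ⟨ha, hb⟩
      · rintro ⟨ha, hb⟩
        exact ⟨ha, fun _ hh => ha hh.1, hb⟩)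
  have e6 : {p : {p // Q p} // ¬ p.val.1 = 1} ≃
      {p : Fin (m + 1) × (Fin (n + 1) → Fin (m + 1)) // p.1 ≠ 1 ∧ P m (n + 1) p.2} :=
    { toFun := fun p => ⟨p.val.val, p.property, p.val.property.2⟩
      invFun := fun p => ⟨⟨p.val, fun h => p.property.1 h.1, p.property.2⟩, p.property.1⟩
      left_inv := by rintro ⟨⟨⟨x, g⟩, hq⟩, hx⟩; rfl
      right_inv := fun p => rfl }
  have key : {f : Fin (n + 2) → Fin (m + 1) // P m (n + 2) f} ≃
      ({x : Fin (m + 1) // x ≠ 1} × {f : Fin n → Fin (m + 1) // P m n f}) ⊕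
      ({x : Fin (m + 1) // x ≠ 1} × {f : Fin (n + 1) → Fin (m + 1) // P m (n + 1) f}) :=
    e1.trans (e2.trans (Equiv.sumCongr
      ((e3.trans e4).trans (Equiv.subtypeProdEquivProd (p := fun x => x ≠ 1) (q := P m n)))
      (e6.trans (Equiv.subtypeProdEquivProd (p := fun x => x ≠ 1) (q := P m (n + 1))))))
  have hx1 : Nat.card {x : Fin (m + 1) // x ≠ 1} = m := by
    rw [Nat.card_eq_fintype_card, Fintype.card_subtype_compl, Fintype.card_subtype_eq]
    simp
  rw [A, Nat.card_congr key, Nat.card_sum, Nat.card_prod, Nat.card_prod, hx1]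
  rw [A, A]
  ring

private lemma A_eq_G (m : ℕ) : ∀ n : ℕ, A m n = G m n
  | 0 => by rw [A_zero, G_zero]
  | 1 => by rw [A_one, G_one]
  | (n + 2) => by rw [A_rec, G_rec, A_eq_G m n, A_eq_G m (n + 1)]

private lemma sum_eq_G (n k : ℕ) :
    (∑ j ∈ Finset.range ((n + 1) / 2 + 1), (n + 1 - j).choose j * 2 ^ ((n - j) * k))
      = G (2 ^ k) n := by
  rw [G]
  rw [Finset.sum_subset]
  · refine Finset.sum_congr rfl fun j hj => ?_
    rw [mul_comm (n - j) k, pow_mul]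
  · intro j hj
    simp only [Finset.mem_range] at hj ⊢
    omega
  · intro j hj hj2
    simp only [Finset.mem_range] at hj hj2
    have : n + 1 - j < j := by omega
    simp [Nat.choose_eq_zero_of_lt this]

theorem stmt12 (n k : ℕ) :
    Nat.card {f : Fin n → Fin (2 ^ k + 1) //
        ∀ i : Fin n, ∀ h : i.val + 1 < n, ¬(f i = 1 ∧ f ⟨i.val + 1, h⟩ = 1)} =
      ∑ j ∈ Finset.range ((n + 1) / 2 + 1),
        (n + 1 - j).choose j * 2 ^ ((n - j) * k) := by
  have h1 : Nat.card {f : Fin n → Fin (2 ^ k + 1) //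
      ∀ i : Fin n, ∀ h : i.val + 1 < n, ¬(f i = 1 ∧ f ⟨i.val + 1, h⟩ = 1)}
      = A (2 ^ k) n := rfl
  rw [h1, sum_eq_G, A_eq_G]
end
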